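/- arXiv:math/0505639 — 4 statements merged into one kernel-verified Lean document; each statement's English description precedes it below -/
import Mathlib

section
/- (Theorem 3.1, type 1 tails) Under the linear quantile regression setup with type 1 tails (ξ = 0), there exists a vector c ∈ ℝ^d with μ_Xᵀc = 0 such that K(x) = exp(−xᵀc) for every x ∈ 𝐗. -/
open MeasureTheory Filter Topology Real


private lemma quantile_facts {g : ℝ → ℝ} (hg : Monotone g) {τ : ℝ}
    (hrc : ∀ z : ℝ, ContinuousWithinAt g (Set.Ici z) z)
    (hne : {z | τ < g z}.Nonempty) (hbd : BddBelow {z | τ < g z}) :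
    τ ≤ g (sInf {z | τ < g z}) ∧ (∀ w, w < sInf {z | τ < g z} → g w ≤ τ)
      ∧ (∀ w, sInf {z | τ < g z} < w → τ < g w) := by
  set S := {z | τ < g z} with hS
  set q := sInf S with hq
  have h3 : ∀ w, q < w → τ < g w := by
    intro w hw
    obtain ⟨b, hb, hbw⟩ := (csInf_lt_iff hbd hne).1 hw
    exact lt_of_lt_of_le hb (hg hbw.le)
  have h2 : ∀ w, w < q → g w ≤ τ := by
    intro w hw
    by_contra h
    exact absurd (csInf_le hbd (by simpa [hS] using lt_of_not_ge h)) (not_le.2 hw)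
  refine ⟨?_, h2, h3⟩
  have hten : Tendsto g (𝓝[>] q) (𝓝 (g q)) :=
    (hrc q).mono_left (nhdsWithin_mono _ Set.Ioi_subset_Ici_self)
  exact ge_of_tendsto hten (eventually_nhdsWithin_of_forall (fun w hw => (h3 w hw).le))


private lemma tendsto_M
    (Fu G : ℝ → ℝ) (hG : Monotone G) (k : ℝ) (hk : 0 < k)
    (a zf q : ℝ → ℝ) (lfil : Filter ℝ)
    (hql : ∀ᶠ τ in 𝓝[>] (0:ℝ), sInf {z | τ < G z} = q τ)
    (hz : Tendsto zf (𝓝[>] (0:ℝ)) lfil)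
    (hWt : ∀ v : ℝ, Tendsto (fun τ => zf τ + v * a (zf τ)) (𝓝[>] (0:ℝ)) lfil)
    (hWp : ∀ v : ℝ, ∀ᶠ τ in 𝓝[>] (0:ℝ), 0 < Fu (zf τ + v * a (zf τ)))
    (hapos : ∀ᶠ τ in 𝓝[>] (0:ℝ), 0 < a (zf τ))
    (hqFu : ∀ᶠ τ in 𝓝[>] (0:ℝ), τ ≤ Fu (zf τ) ∧ ∀ w, w < zf τ → Fu w ≤ τ)
    (htail1 : ∀ v : ℝ, Tendsto (fun z => Fu (z + v * a z) / Fu z) lfil (𝓝 (Real.exp v)))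
    (hGtail : ∀ δ > (0:ℝ), ∀ᶠ z in lfil, |G z / Fu z - k| < δ) :
    Tendsto (fun τ => (q τ - zf τ) / a (zf τ)) (𝓝[>] (0:ℝ)) (𝓝 (-Real.log k)) := by
  set L := -Real.log k with hL
  have hekL : Real.exp L * k = 1 := by
    rw [hL, Real.exp_neg, Real.exp_log hk, inv_mul_cancel₀ (ne_of_gt hk)]
  rw [Metric.tendsto_nhds]
  intro ε hε
  set e2 := ε / 2 with he2def
  have he2 : 0 < e2 := by positivity
  have hexp1 : (1:ℝ) < Real.exp (e2/4) := Real.one_lt_exp_iff.2 (by positivity)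
  have hexp2 : Real.exp (-(e2/4)) < 1 := Real.exp_lt_one_iff.2 (by linarith)
  have ht1 : ∀ v : ℝ, Tendsto (fun τ => Fu (zf τ + v * a (zf τ)) / Fu (zf τ))
      (𝓝[>] (0:ℝ)) (𝓝 (Real.exp v)) := fun v => (htail1 v).comp hz
  have hE1 : ∀ᶠ τ in 𝓝[>] (0:ℝ),
      Fu (zf τ + (L - e2) * a (zf τ)) / Fu (zf τ) < Real.exp (L - e2) * Real.exp (e2/4) := by
    exact (ht1 (L - e2)).eventually_lt_const (lt_mul_of_one_lt_right (Real.exp_pos _) hexp1)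
  have hE2 : ∀ᶠ τ in 𝓝[>] (0:ℝ),
      Real.exp (L + e2) * Real.exp (-(e2/4)) < Fu (zf τ + (L + e2) * a (zf τ)) / Fu (zf τ) := by
    exact (ht1 (L + e2)).eventually_const_lt (mul_lt_of_lt_one_right (Real.exp_pos _) hexp2)
  have hE3 : ∀ᶠ τ in 𝓝[>] (0:ℝ),
      Real.exp (-(e2/4)) < Fu (zf τ + (-(e2/8)) * a (zf τ)) / Fu (zf τ) := by
    refine (ht1 (-(e2/8))).eventually_const_lt ?_
    exact Real.exp_lt_exp.2 (by linarith)
  have hδ1 : (0:ℝ) < k * (Real.exp (e2/4) - 1) := mul_pos hk (by linarith)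
  have hδ2 : (0:ℝ) < k * (1 - Real.exp (-(e2/4))) := mul_pos hk (by linarith)
  have hE4 : ∀ᶠ τ in 𝓝[>] (0:ℝ),
      |G (zf τ + (L - e2) * a (zf τ)) / Fu (zf τ + (L - e2) * a (zf τ)) - k|
        < k * (Real.exp (e2/4) - 1) :=
    (hWt (L - e2)).eventually (hGtail _ hδ1)
  have hE5 : ∀ᶠ τ in 𝓝[>] (0:ℝ),
      |G (zf τ + (L + e2) * a (zf τ)) / Fu (zf τ + (L + e2) * a (zf τ)) - k|
        < k * (1 - Real.exp (-(e2/4))) :=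
    (hWt (L + e2)).eventually (hGtail _ hδ2)
  have hτpos : ∀ᶠ τ in 𝓝[>] (0:ℝ), 0 < τ := eventually_mem_nhdsWithin
  filter_upwards [hE1, hE2, hE3, hE4, hE5, hWp (L - e2), hWp (L + e2), hapos, hqFu, hql, hτpos]
    with τ h1 h2 h3 h4 h5 hp1 hp2 haz hqf hq hτ
  set A := Fu (zf τ) with hA
  have hApos : 0 < A := lt_of_lt_of_le hτ hqf.1
  set w1 := zf τ + (L - e2) * a (zf τ) with hw1
  set w2 := zf τ + (L + e2) * a (zf τ) with hw2
  set w3 := zf τ + (-(e2/8)) * a (zf τ) with hw3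
  -- A < exp(e2/4) * τ
  have hw3lt : w3 < zf τ := by
    rw [hw3]
    have := mul_pos (show (0:ℝ) < e2/8 by positivity) haz
    linarith
  have hFw3 : Fu w3 ≤ τ := hqf.2 w3 hw3lt
  have h3' : Real.exp (-(e2/4)) * A < Fu w3 := (lt_div_iff₀ hApos).1 h3
  have hAτ : A < Real.exp (e2/4) * τ := by
    have hm : Real.exp (e2/4) * (Real.exp (-(e2/4)) * A) < Real.exp (e2/4) * τ :=
      mul_lt_mul_of_pos_left (h3'.trans_le hFw3) (Real.exp_pos _)
    have hcoll : Real.exp (e2/4) * Real.exp (-(e2/4)) = 1 := by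
      rw [← Real.exp_add]; simp
    rw [← mul_assoc, hcoll, one_mul] at hm
    exact hm
  -- Step L : G w1 < τ
  have g1 : G w1 < k * Real.exp (e2/4) * Fu w1 := by
    have habs := (abs_lt.1 h4).2
    have hcv : G w1 / Fu w1 < k * Real.exp (e2/4) := by
      calc G w1 / Fu w1 < k + k * (Real.exp (e2/4) - 1) := by linarith
        _ = k * Real.exp (e2/4) := by ring
    exact (div_lt_iff₀ hp1).1 hcv
  have g2 : Fu w1 < Real.exp (L - e2) * Real.exp (e2/4) * A := (div_lt_iff₀ hApos).1 h1
  have stepL : G w1 < τ := by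
    have c2 : G w1 < k * Real.exp (e2/4) * (Real.exp (L - e2) * Real.exp (e2/4) * A) :=
      g1.trans (mul_lt_mul_of_pos_left g2 (by positivity))
    have c3 : G w1 < k * Real.exp (e2/4) * (Real.exp (L - e2) * Real.exp (e2/4) *
        (Real.exp (e2/4) * τ)) := by
      refine c2.trans (mul_lt_mul_of_pos_left ?_ (by positivity))
      exact mul_lt_mul_of_pos_left hAτ (by positivity)
    have hx : Real.exp (e2/4) * (Real.exp (L - e2) * (Real.exp (e2/4) * Real.exp (e2/4)))
        = Real.exp L * Real.exp (-(e2/4)) := by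
      rw [← Real.exp_add, ← Real.exp_add, ← Real.exp_add, ← Real.exp_add]
      congr 1; ring
    have c4 : k * Real.exp (e2/4) * (Real.exp (L - e2) * Real.exp (e2/4) *
        (Real.exp (e2/4) * τ)) = Real.exp (-(e2/4)) * τ := by
      linear_combination (k * τ) * hx + (τ * Real.exp (-(e2/4))) * hekL
    rw [c4] at c3
    have := mul_lt_of_lt_one_left hτ hexp2
    linarith
  -- Step U : τ < G w2
  have g5 : k * Real.exp (-(e2/4)) * Fu w2 < G w2 := by
    have habs := (abs_lt.1 h5).1
    have hcv : k * Real.exp (-(e2/4)) < G w2 / Fu w2 := by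
      calc k * Real.exp (-(e2/4)) = k - k * (1 - Real.exp (-(e2/4))) := by ring
        _ < G w2 / Fu w2 := by linarith
    exact (lt_div_iff₀ hp2).1 hcv
  have g6 : Real.exp (L + e2) * Real.exp (-(e2/4)) * A < Fu w2 := (lt_div_iff₀ hApos).1 h2
  have stepU : τ < G w2 := by
    have hexph : (1:ℝ) < Real.exp (e2/2) := Real.one_lt_exp_iff.2 (by positivity)
    have hy : Real.exp (-(e2/4)) * (Real.exp (L + e2) * Real.exp (-(e2/4)))
        = Real.exp L * Real.exp (e2/2) := by
      rw [← Real.exp_add, ← Real.exp_add, ← Real.exp_add]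
      congr 1; ring
    have u1 : k * Real.exp (-(e2/4)) * (Real.exp (L + e2) * Real.exp (-(e2/4)) * τ)
        = Real.exp (e2/2) * τ := by
      linear_combination (k * τ) * hy + (τ * Real.exp (e2/2)) * hekL
    have u2 : Real.exp (e2/2) * τ ≤ k * Real.exp (-(e2/4)) *
        (Real.exp (L + e2) * Real.exp (-(e2/4)) * A) := by
      rw [← u1]
      refine mul_le_mul_of_nonneg_left ?_ (by positivity)
      exact mul_le_mul_of_nonneg_left hqf.1 (by positivity)
    have u3 : k * Real.exp (-(e2/4)) * (Real.exp (L + e2) * Real.exp (-(e2/4)) * A)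
        < k * Real.exp (-(e2/4)) * Fu w2 := mul_lt_mul_of_pos_left g6 (by positivity)
    have hstart : τ < Real.exp (e2/2) * τ := lt_mul_of_one_lt_left hτ hexph
    linarith
  -- quantile sandwiching
  have hlow : ∀ z ∈ {z | τ < G z}, w1 ≤ z := by
    intro z hzS
    by_contra hcon
    push_neg at hcon
    exact absurd (lt_of_lt_of_le hzS (hG hcon.le)) (not_lt.2 stepL.le)
  have hub : w1 ≤ q τ := by
    rw [← hq]; exact le_csInf ⟨w2, stepU⟩ hlow
  have hlb : q τ ≤ w2 := by
    rw [← hq]; exact csInf_le ⟨w1, hlow⟩ stepU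
  rw [Real.dist_eq, abs_lt]
  have d1 : L - e2 ≤ (q τ - zf τ) / a (zf τ) := by
    rw [le_div_iff₀ haz]; rw [hw1] at hub; linarith
  have d2 : (q τ - zf τ) / a (zf τ) ≤ L + e2 := by
    rw [div_le_iff₀ haz]; rw [hw2] at hlb; linarith
  constructor <;> [linarith; linarith]


private lemma la_part (d : ℕ) (hd : 0 < d) (Xs : Set (Fin d → ℝ))
    (Lf : (Fin d → ℝ) → ℝ) (eone : Fin d → ℝ)
    (G : EuclideanSpace ℝ (Fin d) → ℝ → ℝ)
    (hGadd : ∀ u w : EuclideanSpace ℝ (Fin d), ∀ τ, G (u + w) τ = G u τ + G w τ)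
    (hGsmul : ∀ (r : ℝ) (w : EuclideanSpace ℝ (Fin d)), ∀ τ, G (r • w) τ = r * G w τ)
    (hG0 : ∀ τ, G 0 τ = 0)
    (hconv : ∀ x ∈ Xs, Tendsto
      (G ((WithLp.equiv 2 (Fin d → ℝ)).symm x - (WithLp.equiv 2 (Fin d → ℝ)).symm eone))
      (𝓝[>] (0:ℝ)) (𝓝 (Lf x)))
    (hEone : ∀ κ : ℝ, Tendsto (G ((WithLp.equiv 2 (Fin d → ℝ)).symm eone))
      (𝓝[>] (0:ℝ)) (𝓝 κ) → κ = 0) :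
    ∃ c : EuclideanSpace ℝ (Fin d),
      (∑ i, eone i * c i) = 0 ∧ ∀ x ∈ Xs, (∑ i, x i * c i) = Lf x := by
  classical
  set ι : (Fin d → ℝ) → EuclideanSpace ℝ (Fin d) :=
    fun w => (WithLp.equiv 2 (Fin d → ℝ)).symm w with hι
  set S : Set (EuclideanSpace ℝ (Fin d)) := (fun x => ι x - ι eone) '' Xs with hSdef
  set V : Submodule ℝ (EuclideanSpace ℝ (Fin d)) := Submodule.span ℝ S with hV
  have hex : ∀ w ∈ V, ∃ r : ℝ, Tendsto (G w) (𝓝[>] (0:ℝ)) (𝓝 r) := by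
    intro w hw
    induction hw using Submodule.span_induction with
    | mem x h => obtain ⟨y, hy, rfl⟩ := h; exact ⟨Lf y, hconv y hy⟩
    | zero => exact ⟨0, by
        rw [show G (0 : EuclideanSpace ℝ (Fin d)) = fun _ => (0:ℝ) from funext hG0]
        exact tendsto_const_nhds⟩
    | add x y hx hy ihx ihy =>
        obtain ⟨r, hr⟩ := ihx; obtain ⟨s, hs⟩ := ihy
        exact ⟨r + s, (hr.add hs).congr (fun τ => (hGadd x y τ).symm)⟩
    | smul r x hx ih =>
        obtain ⟨s, hs⟩ := ih
        exact ⟨r * s, ((hs.const_mul r)).congr (fun τ => (hGsmul r x τ).symm)⟩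
  set ℓ : EuclideanSpace ℝ (Fin d) → ℝ := fun w => limUnder (𝓝[>] (0:ℝ)) (G w) with hℓdef
  have hℓ : ∀ w ∈ V, Tendsto (G w) (𝓝[>] (0:ℝ)) (𝓝 (ℓ w)) := by
    intro w hw
    obtain ⟨r, hr⟩ := hex w hw
    have : ℓ w = r := hr.limUnder_eq
    rwa [this]
  haveI : FiniteDimensional ℝ V := FiniteDimensional.finiteDimensional_submodule V
  set n := Module.finrank ℝ V with hn
  set b := stdOrthonormalBasis ℝ V with hb
  set c₀ : EuclideanSpace ℝ (Fin d) := ∑ j : Fin n, ℓ (b j) • (b j : EuclideanSpace ℝ (Fin d))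
    with hc₀def
  have hGsum : ∀ (s : Finset (Fin n)) (f : Fin n → ℝ) (v : Fin n → EuclideanSpace ℝ (Fin d))
      (τ : ℝ), G (∑ j ∈ s, f j • v j) τ = ∑ j ∈ s, f j * G (v j) τ := by
    intro s
    induction s using Finset.induction_on with
    | empty => intro f v τ; simpa using hG0 τ
    | insert _ _ hni ih =>
        intro f v τ
        rw [Finset.sum_insert hni, Finset.sum_insert hni, hGadd, hGsmul, ih]
  have hc₀ : ∀ w ∈ V, (inner ℝ w c₀ : ℝ) = ℓ w := by
    intro w hw
    set wv : V := ⟨w, hw⟩ with hwv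
    have hexp : w = ∑ j : Fin n, b.repr wv j • (b j : EuclideanSpace ℝ (Fin d)) := by
      have hcoe := congrArg (Subtype.val) (b.sum_repr wv)
      simp only [AddSubmonoidClass.coe_finset_sum, SetLike.val_smul] at hcoe
      exact hcoe.symm
    have htends : Tendsto (G w) (𝓝[>] (0:ℝ)) (𝓝 (∑ j : Fin n, b.repr wv j * ℓ (b j))) := by
      have hts : Tendsto (fun τ => ∑ j : Fin n, b.repr wv j * G (b j) τ) (𝓝[>] (0:ℝ))
          (𝓝 (∑ j : Fin n, b.repr wv j * ℓ (b j))) :=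
        tendsto_finset_sum _ (fun j _ => (hℓ (b j) (SetLike.coe_mem _)).const_mul _)
      refine hts.congr (fun τ => ?_)
      rw [← hGsum Finset.univ (fun j => b.repr wv j)
        (fun j => (b j : EuclideanSpace ℝ (Fin d))) τ, ← hexp]
    have hℓw : ℓ w = ∑ j : Fin n, b.repr wv j * ℓ (b j) := htends.limUnder_eq
    rw [hℓw, hc₀def, inner_sum]
    refine Finset.sum_congr rfl (fun j _ => ?_)
    rw [real_inner_smul_right]
    have hrepr : (inner ℝ w ((b j : EuclideanSpace ℝ (Fin d))) : ℝ) = b.repr wv j := by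
      rw [← real_inner_comm, b.repr_apply_apply wv j, Submodule.coe_inner]
    rw [hrepr]; ring
  set Pe : EuclideanSpace ℝ (Fin d) := (V.orthogonalProjectionOnto (ι eone) : EuclideanSpace ℝ (Fin d))
    with hPe
  set nv : EuclideanSpace ℝ (Fin d) := ι eone - Pe with hnv
  have hnperp : nv ∈ Vᗮ := V.sub_starProjection_mem_orthogonal (ι eone)
  have hinner_nv : ∀ u ∈ V, (inner ℝ u nv : ℝ) = 0 := fun u hu =>
    (Submodule.mem_orthogonal V nv).1 hnperp u hu
  set t : ℝ := if nv = 0 then 0 else -(inner ℝ (ι eone) c₀ : ℝ) / (‖nv‖^2) with ht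
  set c : EuclideanSpace ℝ (Fin d) := c₀ + t • nv with hc
  have hSV : ∀ x ∈ Xs, ι x - ι eone ∈ V := fun x hx =>
    Submodule.subset_span ⟨x, hx, rfl⟩
  have hinner_eone : (inner ℝ (ι eone) c : ℝ) = 0 := by
    by_cases h0 : nv = 0
    · have heV : ι eone ∈ V := by
        have he : ι eone = Pe := by
          have := sub_eq_zero.1 h0; exact this
        rw [he]; exact SetLike.coe_mem _
      have hval : (inner ℝ (ι eone) c : ℝ) = ℓ (ι eone) := by
        rw [hc, h0, smul_zero, add_zero]; exact hc₀ _ heV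
      rw [hval]
      exact hEone _ (hℓ _ heV)
    · have hPeV : Pe ∈ V := SetLike.coe_mem _
      have h1 : (inner ℝ (ι eone) nv : ℝ) = ‖nv‖^2 := by
        have hsplit : ι eone = Pe + nv := by rw [hnv]; abel
        calc (inner ℝ (ι eone) nv : ℝ) = inner ℝ (Pe + nv) nv := by rw [← hsplit]
          _ = (inner ℝ Pe nv : ℝ) + inner ℝ nv nv := by rw [inner_add_left]
          _ = 0 + ‖nv‖^2 := by rw [hinner_nv Pe hPeV, real_inner_self_eq_norm_sq]
          _ = ‖nv‖^2 := by ring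
      have hnorm : ‖nv‖^2 ≠ 0 := by
        simpa using h0
      rw [hc, inner_add_right, real_inner_smul_right, h1, ht, if_neg h0]
      field_simp
      ring
  have hinner_sum : ∀ (u : Fin d → ℝ) (w : EuclideanSpace ℝ (Fin d)),
      (inner ℝ (ι u) w : ℝ) = ∑ i, u i * w i := by
    intro u w
    rw [PiLp.inner_apply]
    exact Finset.sum_congr rfl (fun i _ => by
      simp [hι, RCLike.inner_apply, WithLp.equiv_symm_apply, PiLp.toLp_apply]; ring)
  have hinner_x : ∀ x ∈ Xs, (inner ℝ (ι x) c : ℝ) = Lf x := by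
    intro x hx
    have hdiff : (inner ℝ (ι x - ι eone) c : ℝ) = Lf x := by
      have h2 : (inner ℝ (ι x - ι eone) nv : ℝ) = 0 := hinner_nv _ (hSV x hx)
      have h3 : (inner ℝ (ι x - ι eone) c₀ : ℝ) = ℓ (ι x - ι eone) := hc₀ _ (hSV x hx)
      have h4 : ℓ (ι x - ι eone) = Lf x := (hconv x hx).limUnder_eq
      rw [hc, inner_add_right, real_inner_smul_right, h2, h3, h4]; ring
    have h5 : (inner ℝ (ι x) c : ℝ) = inner ℝ (ι x - ι eone) c + inner ℝ (ι eone) c := by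
      rw [inner_sub_left]; ring
    rw [h5, hdiff, hinner_eone, add_zero]
  refine ⟨c, ?_, ?_⟩
  · rw [← hinner_sum eone c]; exact hinner_eone
  · intro x hx
    rw [← hinner_sum x c]; exact hinner_x x hx


-- Case 1 (finite lower endpoint 0) toolkit
private lemma c1_apos (Fu a : ℝ → ℝ) (hFumono : Monotone Fu)
    (hFurange : ∀ z : ℝ, Fu z ∈ Set.Icc (0:ℝ) 1)
    (hpos : ∀ z > (0:ℝ), 0 < Fu z)
    (hint : ∀ z > (0:ℝ), IntegrableOn Fu (Set.Ioc 0 z))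
    (ha : ∀ z > (0:ℝ), a z = (∫ v in Set.Ioc (0:ℝ) z, Fu v) / Fu z) :
    ∀ z > (0:ℝ), 0 < a z := by
  intro z hz
  rw [ha z hz]
  apply div_pos ?_ (hpos z hz)
  have h1 : Fu (z/2) * (z - z/2) ≤ ∫ v in Set.Ioc (z/2) z, Fu v := by
    have hc : ∫ (_ : ℝ) in Set.Ioc (z/2) z, Fu (z/2) = Fu (z/2) * (z - z/2) := by
      rw [setIntegral_const, measureReal_def, Real.volume_Ioc, ENNReal.toReal_ofReal (by linarith), smul_eq_mul,
        mul_comm]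
    rw [← hc]
    refine setIntegral_mono_on ?_ ((hint z hz).mono_set (Set.Ioc_subset_Ioc_left (by linarith)))
      measurableSet_Ioc (fun v hv => hFumono hv.1.le)
    exact (integrableOn_const_iff (by simp)).2 (Or.inr (by rw [Real.volume_Ioc]; exact ENNReal.ofReal_lt_top))
  have h2 : ∫ v in Set.Ioc (z/2) z, Fu v ≤ ∫ v in Set.Ioc 0 z, Fu v := by
    refine setIntegral_mono_set (hint z hz)
      (Filter.Eventually.of_forall (fun v => (hFurange v).1)) ?_
    exact HasSubset.Subset.eventuallyLE (Set.Ioc_subset_Ioc_left (by linarith))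
  have h3 : 0 < Fu (z/2) * (z - z/2) :=
    mul_pos (hpos _ (by linarith)) (by linarith)
  linarith

private lemma c1_aux (Fu a : ℝ → ℝ) (hFumono : Monotone Fu)
    (hpos : ∀ z > (0:ℝ), 0 < Fu z)
    (hint : ∀ z > (0:ℝ), IntegrableOn Fu (Set.Ioc 0 z))
    (ha : ∀ z > (0:ℝ), a z = (∫ v in Set.Ioc (0:ℝ) z, Fu v) / Fu z) :
    ∀ z > (0:ℝ), a z ≤ z := by
  intro z hz
  rw [ha z hz, div_le_iff₀ (hpos z hz)]
  have hc : ∫ (_ : ℝ) in Set.Ioc (0:ℝ) z, Fu z = z * Fu z := by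
    rw [setIntegral_const, measureReal_def, Real.volume_Ioc, ENNReal.toReal_ofReal (by linarith), smul_eq_mul,
      sub_zero]
  rw [← hc]
  refine setIntegral_mono_on (hint z hz) ?_ measurableSet_Ioc (fun v hv => hFumono hv.2)
  exact (integrableOn_const_iff (by simp)).2 (Or.inr (by rw [Real.volume_Ioc]; exact ENNReal.ofReal_lt_top))

private lemma c1_Fu0 (Fu a : ℝ → ℝ) (hFumono : Monotone Fu)
    (hFurange : ∀ z : ℝ, Fu z ∈ Set.Icc (0:ℝ) 1)
    (hpos : ∀ z > (0:ℝ), 0 < Fu z)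
    (hapos : ∀ z > (0:ℝ), 0 < a z)
    (haux : ∀ z > (0:ℝ), a z ≤ z)
    (htail1 : Tendsto (fun z => Fu (z + 1 * a z) / Fu z) (𝓝[>] (0:ℝ)) (𝓝 (Real.exp 1))) :
    Tendsto Fu (𝓝[>] (0:ℝ)) (𝓝 0) := by
  have hlim := hFumono.tendsto_nhdsGT 0
  set p := sInf (Fu '' Set.Ioi 0) with hp
  have hp0 : 0 ≤ p := Real.sInf_nonneg (by rintro y ⟨w, hw, rfl⟩; exact (hFurange w).1)
  rcases eq_or_lt_of_le hp0 with heq | hlt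
  · rwa [← heq] at hlim
  · exfalso
    have h2z : Tendsto (fun z : ℝ => Fu (2 * z)) (𝓝[>] (0:ℝ)) (𝓝 p) := by
      refine hlim.comp ?_
      rw [tendsto_nhdsWithin_iff]
      constructor
      · have : Tendsto (fun z : ℝ => 2 * z) (𝓝 0) (𝓝 (2 * 0)) :=
          (continuous_const.mul continuous_id).tendsto 0
        simpa using this.mono_left nhdsWithin_le_nhds
      · exact eventually_nhdsWithin_of_forall (fun z hz => by
          simp only [Set.mem_Ioi] at hz ⊢; linarith)
    have hself : Tendsto Fu (𝓝[>] (0:ℝ)) (𝓝 p) := hlim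
    have hratio : Tendsto (fun z => Fu (2 * z) / Fu z) (𝓝[>] (0:ℝ)) (𝓝 1) := by
      have := h2z.div hself (ne_of_gt hlt)
      simpa [div_self (ne_of_gt hlt), Pi.div_def] using this
    have hsq : Tendsto (fun z => Fu (z + 1 * a z) / Fu z) (𝓝[>] (0:ℝ)) (𝓝 1) := by
      refine tendsto_of_tendsto_of_tendsto_of_le_of_le' tendsto_const_nhds hratio ?_ ?_
      · exact eventually_nhdsWithin_of_forall (fun z hz => by
          have h1 : 0 < Fu z := hpos z hz
          have h2 : Fu z ≤ Fu (z + 1 * a z) := hFumono (by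
            have := hapos z hz; simp only [one_mul]; linarith)
          rw [le_div_iff₀ h1, one_mul]; exact h2)
      · exact eventually_nhdsWithin_of_forall (fun z hz => by
          have h1 : 0 < Fu z := hpos z hz
          have h2 : Fu (z + 1 * a z) ≤ Fu (2 * z) := hFumono (by
            have := haux z hz; simp only [one_mul]; linarith)
          gcongr)
    have := tendsto_nhds_unique htail1 hsq
    have : (1:ℝ) < Real.exp 1 := Real.one_lt_exp_iff.2 one_pos
    linarith [tendsto_nhds_unique htail1 hsq]

private lemma main_core (d : ℕ) (hd : 0 < d) (Xs : Set (Fin d → ℝ))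
    (η : ℝ) (hη0 : 0 < η)
    (γ : ℝ → Fin d → ℝ)
    (F : (Fin d → ℝ) → ℝ → ℝ)
    (hFmono : ∀ x ∈ Xs, Monotone (F x))
    (hlin : ∀ τ ∈ Set.Ioc (0:ℝ) η, ∀ x ∈ Xs, sInf {z | τ < F x z} = ∑ i, x i * γ τ i)
    (Fu : ℝ → ℝ) (K : (Fin d → ℝ) → ℝ) (hKpos : ∀ x ∈ Xs, 0 < K x)
    (a : ℝ → ℝ) (lfil : Filter ℝ)
    (htail1 : ∀ v : ℝ, Tendsto (fun z => Fu (z + v * a z) / Fu z) lfil (𝓝 (Real.exp v)))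
    (htaileq : TendstoUniformlyOn (fun z x => F x z / Fu z) K lfil Xs)
    (zf : ℝ → ℝ) (hzf : zf = fun τ => γ τ ⟨0, hd⟩)
    (hz : Tendsto zf (𝓝[>] (0:ℝ)) lfil)
    (hWt : ∀ v : ℝ, Tendsto (fun τ => zf τ + v * a (zf τ)) (𝓝[>] (0:ℝ)) lfil)
    (hWp : ∀ v : ℝ, ∀ᶠ τ in 𝓝[>] (0:ℝ), 0 < Fu (zf τ + v * a (zf τ)))
    (hapos : ∀ᶠ τ in 𝓝[>] (0:ℝ), 0 < a (zf τ))
    (hqFu : ∀ᶠ τ in 𝓝[>] (0:ℝ), τ ≤ Fu (zf τ) ∧ ∀ w, w < zf τ → Fu w ≤ τ)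
    (hzero : ∀ κ : ℝ, Tendsto (fun τ => zf τ / a (zf τ)) (𝓝[>] (0:ℝ)) (𝓝 κ) → κ = 0) :
    ∃ c : Fin d → ℝ, c ⟨0, hd⟩ = 0 ∧ ∀ x ∈ Xs, K x = Real.exp (-(∑ i, x i * c i)) := by
  classical
  set i0 : Fin d := ⟨0, hd⟩ with hi0
  set eone : Fin d → ℝ := fun i => if i = i0 then 1 else 0 with heone
  have hsume : ∀ g : Fin d → ℝ, ∑ i, eone i * g i = g i0 := by
    intro g
    rw [heone]
    simp [ite_mul, Finset.sum_ite_eq']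
  have hGtail : ∀ x ∈ Xs, ∀ δ > (0:ℝ), ∀ᶠ z in lfil, |F x z / Fu z - K x| < δ := by
    intro x hx δ hδ
    have := Metric.tendstoUniformlyOn_iff.1 htaileq δ hδ
    filter_upwards [this] with z hz'
    have := hz' x hx
    rwa [Real.dist_eq, abs_sub_comm] at this
  have hql : ∀ x ∈ Xs, ∀ᶠ τ in 𝓝[>] (0:ℝ), sInf {z | τ < F x z} = ∑ i, x i * γ τ i := by
    intro x hx
    filter_upwards [Filter.mem_of_superset (Ioc_mem_nhdsGT_of_mem ⟨le_rfl, hη0⟩)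
      (fun τ hτ => hτ : ∀ τ ∈ Set.Ioc (0:ℝ) η, τ ∈ Set.Ioc (0:ℝ) η)] with τ hτ
    exact hlin τ hτ x hx
  have hM : ∀ x ∈ Xs, Tendsto (fun τ => ((∑ i, x i * γ τ i) - zf τ) / a (zf τ))
      (𝓝[>] (0:ℝ)) (𝓝 (-Real.log (K x))) := by
    intro x hx
    exact tendsto_M Fu (F x) (hFmono x hx) (K x) (hKpos x hx) a zf
      (fun τ => ∑ i, x i * γ τ i) lfil (hql x hx) hz hWt hWp hapos hqFu htail1 (hGtail x hx)
  set Gf : EuclideanSpace ℝ (Fin d) → ℝ → ℝ :=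
    fun w τ => (∑ i, w i * γ τ i) / a (zf τ) with hGf
  have hGadd : ∀ u w : EuclideanSpace ℝ (Fin d), ∀ τ, Gf (u + w) τ = Gf u τ + Gf w τ := by
    intro u w τ
    rw [hGf]
    simp only [PiLp.add_apply, add_mul, Finset.sum_add_distrib, add_div]
  have hGsmul : ∀ (r : ℝ) (w : EuclideanSpace ℝ (Fin d)), ∀ τ, Gf (r • w) τ = r * Gf w τ := by
    intro r w τ
    rw [hGf]
    simp only [PiLp.smul_apply, smul_eq_mul, mul_assoc, ← Finset.mul_sum, mul_div_assoc]
  have hG0 : ∀ τ, Gf 0 τ = 0 := by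
    intro τ; rw [hGf]; simp
  have hpt : ∀ (x : Fin d → ℝ) (τ : ℝ),
      Gf ((WithLp.equiv 2 (Fin d → ℝ)).symm x - (WithLp.equiv 2 (Fin d → ℝ)).symm eone) τ
        = ((∑ i, x i * γ τ i) - zf τ) / a (zf τ) := by
    intro x τ
    rw [hGf]
    simp only [PiLp.sub_apply, WithLp.equiv_symm_apply, PiLp.toLp_apply, sub_mul, Finset.sum_sub_distrib]
    rw [hsume (fun i => γ τ i), hzf]
  have hpte : ∀ τ : ℝ,
      Gf ((WithLp.equiv 2 (Fin d → ℝ)).symm eone) τ = zf τ / a (zf τ) := by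
    intro τ
    rw [hGf]
    simp only [WithLp.equiv_symm_apply, PiLp.toLp_apply]
    rw [hsume (fun i => γ τ i), hzf]
  obtain ⟨c, hc1, hc2⟩ := la_part d hd Xs (fun x => -Real.log (K x)) eone Gf hGadd hGsmul hG0
    (fun x hx => ((hM x hx).congr (fun τ => (hpt x τ).symm)))
    (fun κ hκ => hzero κ (hκ.congr hpte))
  refine ⟨fun i => c i, ?_, ?_⟩
  · show c i0 = 0
    rw [← hsume (fun i => c i)]
    exact hc1
  · intro x hx
    have hv : (∑ i, x i * c i) = -Real.log (K x) := hc2 x hx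
    show K x = Real.exp (-(∑ i, x i * c i))
    rw [hv, neg_neg, Real.exp_log (hKpos x hx)]

theorem extremal_qr_thm31_type1
    (d : ℕ) (hd : 1 ≤ d)
    (μ : Measure (Fin d → ℝ)) [IsProbabilityMeasure μ]
    (Xs : Set (Fin d → ℝ))
    (hXssupp : ∀ x, x ∈ Xs ↔ ∀ U ∈ 𝓝 x, 0 < μ U)
    (hXscpt : IsCompact Xs)
    (hposdef : (Matrix.of fun i j : Fin d => ∫ x, x i * x j ∂μ).PosDef)
    (hmean : ∀ i : Fin d, (∫ x, x i ∂μ) = if (i : ℕ) = 0 then (1:ℝ) else 0)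
    (η : ℝ) (hη : η ∈ Set.Ioc (0:ℝ) 1)
    (γ : ℝ → Fin d → ℝ)
    (F : (Fin d → ℝ) → ℝ → ℝ)
    (hFmono : ∀ x ∈ Xs, Monotone (F x))
    (hFrc : ∀ x ∈ Xs, ∀ z : ℝ, ContinuousWithinAt (F x) (Set.Ici z) z)
    (hFrange : ∀ x ∈ Xs, ∀ z : ℝ, F x z ∈ Set.Icc (0:ℝ) 1)
    (hlin : ∀ τ ∈ Set.Ioc (0:ℝ) η, ∀ x ∈ Xs, sInf {z | τ < F x z} = ∑ i, x i * γ τ i)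
    (Fu : ℝ → ℝ)
    (hFumono : Monotone Fu)
    (hFurc : ∀ z : ℝ, ContinuousWithinAt Fu (Set.Ici z) z)
    (hFurange : ∀ z : ℝ, Fu z ∈ Set.Icc (0:ℝ) 1)
    (hFuinv : ∀ τ ∈ Set.Ioc (0:ℝ) η, sInf {z | τ < Fu z} = ∑ i, (∫ x, x i ∂μ) * γ τ i)
    (K : (Fin d → ℝ) → ℝ)
    (hKcont : ContinuousOn K Xs)
    (hKbdd : BddAbove (K '' Xs))
    (hKpos : ∀ x ∈ Xs, 0 < K x)
    (a : ℝ → ℝ) (lfil : Filter ℝ)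
    (hcase :
      (lfil = 𝓝[>] (0:ℝ) ∧ (∀ z < (0:ℝ), Fu z = 0) ∧ (∀ z > (0:ℝ), 0 < Fu z) ∧
        (∀ z > (0:ℝ), IntegrableOn Fu (Set.Ioc 0 z)) ∧
        (∀ z > (0:ℝ), a z = (∫ v in Set.Ioc (0:ℝ) z, Fu v) / Fu z)) ∨
      (lfil = atBot ∧ (∀ z : ℝ, 0 < Fu z) ∧
        (∀ z : ℝ, IntegrableOn Fu (Set.Iic z)) ∧
        (∀ z : ℝ, a z = (∫ v in Set.Iic z, Fu v) / Fu z)))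
    (htail1 : ∀ v : ℝ, Tendsto (fun z => Fu (z + v * a z) / Fu z) lfil (𝓝 (Real.exp v)))
    (htaileq : TendstoUniformlyOn (fun z x => F x z / Fu z) K lfil Xs)
    :
    ∃ c : Fin d → ℝ, (∑ i, (∫ x, x i ∂μ) * c i) = 0 ∧
      ∀ x ∈ Xs, K x = Real.exp (-(∑ i, x i * c i)) := by
  classical
  have hd0 : 0 < d := hd
  set i0 : Fin d := ⟨0, hd0⟩ with hi0
  have hsumμ : ∀ g : Fin d → ℝ, ∑ i, (∫ x, x i ∂μ) * g i = g i0 := by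
    intro g
    have h1 : ∀ i : Fin d, (∫ x, x i ∂μ) * g i = (if i = i0 then 1 else 0) * g i := by
      intro i
      rw [hmean i]
      congr 1
      by_cases h : i = i0
      · subst h; simp [hi0]
      · have hne : (i : ℕ) ≠ 0 := by
          intro hc
          exact h (Fin.ext (by simp [hi0, hc]))
        simp [h, hne]
    rw [Finset.sum_congr rfl (fun i _ => h1 i)]
    simp [ite_mul, Finset.sum_ite_eq']
  set zf : ℝ → ℝ := fun τ => γ τ i0 with hzfdef
  have hzfinv : ∀ τ ∈ Set.Ioc (0:ℝ) η, sInf {z | τ < Fu z} = zf τ := by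
    intro τ hτ
    rw [hFuinv τ hτ, hsumμ (fun i => γ τ i)]
  suffices h : ∃ c : Fin d → ℝ, c i0 = 0 ∧ ∀ x ∈ Xs, K x = Real.exp (-(∑ i, x i * c i)) by
    obtain ⟨c, hc1, hc2⟩ := h
    exact ⟨c, by rw [hsumμ c]; exact hc1, hc2⟩
  have hFu0nn : ∀ z, 0 ≤ Fu z := fun z => (hFurange z).1
  rcases hcase with ⟨hl, h0, hpos, hint, ha⟩ | ⟨hl, hpos, hint, ha⟩
  · -- Case 1 : finite lower endpoint 0
    subst hl
    have hapos' := c1_apos Fu a hFumono hFurange hpos hint ha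
    have haux := c1_aux Fu a hFumono hpos hint ha
    have hFu0 := c1_Fu0 Fu a hFumono hFurange hpos hapos' haux (htail1 1)
    have hasmall : ∀ C : ℝ, 0 < C → ∀ᶠ z in 𝓝[>] (0:ℝ), a z * C ≤ z := by
      intro C hC
      filter_upwards [(htail1 (-C)).eventually_const_lt (Real.exp_pos (-C)),
        self_mem_nhdsWithin] with z hr hz0
      have hz0' : (0:ℝ) < z := hz0
      have hFz : 0 < Fu z := hpos z hz0'
      have hnum : 0 < Fu (z + -C * a z) := by
        rcases div_pos_iff.1 hr with ⟨h1, _⟩ | ⟨_, h2⟩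
        · exact h1
        · linarith
      by_contra hcon
      push_neg at hcon
      have hlt : z + -C * a z < 0 := by nlinarith
      rw [h0 _ hlt] at hnum
      exact absurd hnum (lt_irrefl 0)
    have hbdd : ∀ τ : ℝ, 0 < τ → BddBelow {z | τ < Fu z} := by
      intro τ hτ
      refine ⟨0, fun z hzS => ?_⟩
      by_contra hcn
      push_neg at hcn
      rw [Set.mem_setOf_eq, h0 z hcn] at hzS
      linarith
    have hqfacts : ∀ᶠ τ in 𝓝[>] (0:ℝ),
        (τ ≤ Fu (zf τ) ∧ ∀ w, w < zf τ → Fu w ≤ τ) ∧ (∀ w, zf τ < w → τ < Fu w) := by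
      have hFu1 : 0 < Fu 1 := hpos 1 one_pos
      filter_upwards [Ioc_mem_nhdsGT_of_mem (Set.mem_Ico.2 ⟨le_rfl, hη.1⟩),
        Ioo_mem_nhdsGT_of_mem (Set.mem_Ico.2 ⟨le_rfl, hFu1⟩)] with τ hτη hτF1
      have hne : {z | τ < Fu z}.Nonempty := ⟨1, hτF1.2⟩
      have hq := quantile_facts hFumono hFurc hne (hbdd τ hτη.1)
      rw [hzfinv τ hτη] at hq
      exact ⟨⟨hq.1, hq.2.1⟩, hq.2.2⟩
    have hzfpos : ∀ᶠ τ in 𝓝[>] (0:ℝ), 0 < zf τ := by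
      filter_upwards [hqfacts, self_mem_nhdsWithin] with τ hq hτ0
      have hτ0' : (0:ℝ) < τ := hτ0
      by_contra hcon
      push_neg at hcon
      have hev : ∀ᶠ w in 𝓝[>] (0:ℝ), τ ≤ Fu w :=
        eventually_nhdsWithin_of_forall (fun w hw =>
          (hq.2 w (lt_of_le_of_lt hcon hw)).le)
      have := ge_of_tendsto hFu0 hev
      linarith
    have hzf0 : Tendsto zf (𝓝[>] (0:ℝ)) (𝓝[>] (0:ℝ)) := by
      rw [tendsto_nhdsWithin_iff]
      constructor
      · rw [tendsto_order]
        constructor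
        · intro b hb
          filter_upwards [hzfpos] with τ h
          linarith
        · intro b hb
          have hFb : 0 < Fu (b/2) := hpos _ (by linarith)
          filter_upwards [Ioc_mem_nhdsGT_of_mem (Set.mem_Ico.2 ⟨le_rfl, hη.1⟩),
            Ioo_mem_nhdsGT_of_mem (Set.mem_Ico.2 ⟨le_rfl, hFb⟩)] with τ hτη hτb
          have hle : sInf {z | τ < Fu z} ≤ b/2 := csInf_le (hbdd τ hτη.1) hτb.2
          rw [hzfinv τ hτη] at hle
          linarith
      · filter_upwards [hzfpos] with τ h using h
    have hWin : ∀ v : ℝ, ∀ᶠ τ in 𝓝[>] (0:ℝ),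
        0 < zf τ + v * a (zf τ) ∧ zf τ + v * a (zf τ) ≤ 2 * zf τ := by
      intro v
      filter_upwards [hzf0.eventually (hasmall (|v|+1) (by positivity)), hzfpos]
        with τ hsm hp
      have hpa : 0 < a (zf τ) := hapos' _ hp
      have h2 : |v * a (zf τ)| ≤ zf τ - a (zf τ) := by
        rw [abs_mul, abs_of_pos hpa]
        nlinarith [abs_nonneg v]
      constructor
      · have := neg_abs_le (v * a (zf τ)); linarith
      · have := le_abs_self (v * a (zf τ)); linarith
    have hWt : ∀ v : ℝ, Tendsto (fun τ => zf τ + v * a (zf τ)) (𝓝[>] (0:ℝ)) (𝓝[>] (0:ℝ)) := by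
      intro v
      rw [tendsto_nhdsWithin_iff]
      refine ⟨?_, (hWin v).mono (fun τ h => h.1)⟩
      have hzf00 : Tendsto zf (𝓝[>] (0:ℝ)) (𝓝 0) := (tendsto_nhdsWithin_iff.1 hzf0).1
      refine squeeze_zero' ((hWin v).mono fun τ h => h.1.le) ((hWin v).mono fun τ h => h.2) ?_
      simpa using hzf00.const_mul 2
    have hWp : ∀ v : ℝ, ∀ᶠ τ in 𝓝[>] (0:ℝ), 0 < Fu (zf τ + v * a (zf τ)) :=
      fun v => (hWin v).mono (fun τ h => hpos _ h.1)
    have hapos2 : ∀ᶠ τ in 𝓝[>] (0:ℝ), 0 < a (zf τ) := hzfpos.mono (fun τ h => hapos' _ h)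
    have hqFu : ∀ᶠ τ in 𝓝[>] (0:ℝ), τ ≤ Fu (zf τ) ∧ ∀ w, w < zf τ → Fu w ≤ τ :=
      hqfacts.mono (fun τ h => h.1)
    have hzero : ∀ κ : ℝ, Tendsto (fun τ => zf τ / a (zf τ)) (𝓝[>] (0:ℝ)) (𝓝 κ) → κ = 0 := by
      intro κ hκ
      exfalso
      have hatop : Tendsto (fun τ => zf τ / a (zf τ)) (𝓝[>] (0:ℝ)) atTop := by
        rw [tendsto_atTop]
        intro b
        filter_upwards [hzf0.eventually (hasmall (|b|+1) (by positivity)), hzfpos]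
          with τ hsm hp
        have hpa := hapos' _ hp
        have hb1 : (|b|+1) ≤ zf τ / a (zf τ) := (le_div_iff₀ hpa).2 (by linarith)
        linarith [le_abs_self b]
      exact not_tendsto_nhds_of_tendsto_atTop hatop κ hκ
    exact main_core d hd0 Xs η hη.1 γ F hFmono hlin Fu K hKpos a _ htail1 htaileq zf
      hzfdef hzf0 hWt hWp hapos2 hqFu hzero
  · -- Case 2 : lower endpoint -∞
    subst hl
    have hapos' : ∀ z : ℝ, 0 < a z := by
      intro z
      rw [ha z]
      apply div_pos ?_ (hpos z)
      have hc : ∫ (_ : ℝ) in Set.Ioc (z-1) z, Fu (z-1) = Fu (z-1) * (z - (z-1)) := by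
        rw [setIntegral_const, measureReal_def, Real.volume_Ioc, ENNReal.toReal_ofReal (by linarith),
          smul_eq_mul, mul_comm]
      have h1 : Fu (z-1) * (z - (z-1)) ≤ ∫ v in Set.Ioc (z-1) z, Fu v := by
        rw [← hc]
        refine setIntegral_mono_on ?_ ((hint z).mono_set Set.Ioc_subset_Iic_self)
          measurableSet_Ioc (fun v hv => hFumono hv.1.le)
        exact (integrableOn_const_iff (by simp)).2 (Or.inr (by rw [Real.volume_Ioc]; exact ENNReal.ofReal_lt_top))
      have h2 : ∫ v in Set.Ioc (z-1) z, Fu v ≤ ∫ v in Set.Iic z, Fu v := by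
        refine setIntegral_mono_set (hint z)
          (Filter.Eventually.of_forall (fun v => hFu0nn v)) ?_
        exact HasSubset.Subset.eventuallyLE Set.Ioc_subset_Iic_self
      have h3 : 0 < Fu (z-1) * (z - (z-1)) := by
        have := hpos (z-1); nlinarith
      linarith
    have hFubot : Tendsto Fu atBot (𝓝 0) := by
      have hbddr : BddBelow (Set.range Fu) := ⟨0, by rintro y ⟨w, rfl⟩; exact hFu0nn w⟩
      have hlim := tendsto_atBot_ciInf hFumono hbddr
      have hinf0 : ⨅ z, Fu z = 0 := by
        have hge : 0 ≤ ⨅ z, Fu z := le_ciInf (fun z => hFu0nn z)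
        rcases eq_or_lt_of_le hge with h|h
        · exact h.symm
        · exfalso
          have hle : ∀ z : ℝ, (⨅ w, Fu w) ≤ Fu z := fun z => ciInf_le hbddr z
          have hcint : IntegrableOn (fun _ : ℝ => (⨅ w, Fu w)) (Set.Iic 0) := by
            refine Integrable.mono' (hint 0) aestronglyMeasurable_const ?_
            exact Filter.Eventually.of_forall (fun z => by
              rw [Real.norm_eq_abs, abs_of_pos h]; exact hle z)
          rcases (integrableOn_const_iff (by simp)).1 hcint with hcc | hcc
          · simp at hcc; linarith
          · rw [Real.volume_Iic] at hcc
            exact absurd hcc (by simp)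
      rwa [hinf0] at hlim
    have hbdd2 : ∀ τ : ℝ, 0 < τ → BddBelow {z | τ < Fu z} := by
      intro τ hτ
      have hev : ∀ᶠ z in atBot, Fu z < τ := hFubot.eventually_lt_const hτ
      rw [eventually_atBot] at hev
      obtain ⟨N, hN⟩ := hev
      refine ⟨N, fun z hzS => ?_⟩
      by_contra hcn
      push_neg at hcn
      have := hN z hcn.le
      rw [Set.mem_setOf_eq] at hzS
      linarith
    have hqfacts : ∀ᶠ τ in 𝓝[>] (0:ℝ),
        τ ≤ Fu (zf τ) ∧ ∀ w, w < zf τ → Fu w ≤ τ := by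
      have hFu1 : 0 < Fu 1 := hpos 1
      filter_upwards [Ioc_mem_nhdsGT_of_mem (Set.mem_Ico.2 ⟨le_rfl, hη.1⟩),
        Ioo_mem_nhdsGT_of_mem (Set.mem_Ico.2 ⟨le_rfl, hFu1⟩)] with τ hτη hτF1
      have hne : {z | τ < Fu z}.Nonempty := ⟨1, hτF1.2⟩
      have hq := quantile_facts hFumono hFurc hne (hbdd2 τ hτη.1)
      rw [hzfinv τ hτη] at hq
      exact ⟨hq.1, hq.2.1⟩
    have hzfbot : Tendsto zf (𝓝[>] (0:ℝ)) atBot := by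
      rw [tendsto_atBot]
      intro b
      have hFb : 0 < Fu b := hpos b
      filter_upwards [Ioc_mem_nhdsGT_of_mem (Set.mem_Ico.2 ⟨le_rfl, hη.1⟩),
        Ioo_mem_nhdsGT_of_mem (Set.mem_Ico.2 ⟨le_rfl, hFb⟩)] with τ hτη hτb
      have hle : sInf {z | τ < Fu z} ≤ b := csInf_le (hbdd2 τ hτη.1) hτb.2
      rwa [hzfinv τ hτη] at hle
    have hFuzf : Tendsto (fun τ => Fu (zf τ)) (𝓝[>] (0:ℝ)) (𝓝 0) := hFubot.comp hzfbot
    have hWt : ∀ v : ℝ, Tendsto (fun τ => zf τ + v * a (zf τ)) (𝓝[>] (0:ℝ)) atBot := by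
      intro v
      have hrat : Tendsto (fun τ => Fu (zf τ + v * a (zf τ)) / Fu (zf τ)) (𝓝[>] (0:ℝ))
          (𝓝 (Real.exp v)) := (htail1 v).comp hzfbot
      have hFw : Tendsto (fun τ => Fu (zf τ + v * a (zf τ))) (𝓝[>] (0:ℝ)) (𝓝 0) := by
        have hub : ∀ᶠ τ in 𝓝[>] (0:ℝ),
            Fu (zf τ + v * a (zf τ)) ≤ (Real.exp v + 1) * Fu (zf τ) := by
          filter_upwards [hrat.eventually_lt_const (lt_add_one _)] with τ h
          have hFz : 0 < Fu (zf τ) := hpos _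
          exact le_of_lt ((div_lt_iff₀ hFz).1 h)
        refine squeeze_zero' (Filter.Eventually.of_forall (fun τ => hFu0nn _)) hub ?_
        simpa using hFuzf.const_mul (Real.exp v + 1)
      rw [tendsto_atBot]
      intro b
      have hFb : 0 < Fu b := hpos b
      filter_upwards [hFw.eventually_lt_const hFb] with τ h
      by_contra hcn
      push_neg at hcn
      exact absurd (hFumono hcn.le) (not_le.2 h)
    have hWp : ∀ v : ℝ, ∀ᶠ τ in 𝓝[>] (0:ℝ), 0 < Fu (zf τ + v * a (zf τ)) :=
      fun v => Filter.Eventually.of_forall (fun τ => hpos _)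
    have hapos2 : ∀ᶠ τ in 𝓝[>] (0:ℝ), 0 < a (zf τ) :=
      Filter.Eventually.of_forall (fun τ => hapos' (zf τ))
    have hzero : ∀ κ : ℝ, Tendsto (fun τ => zf τ / a (zf τ)) (𝓝[>] (0:ℝ)) (𝓝 κ) → κ = 0 := by
      intro κ hκ
      have hneg : ∀ᶠ τ in 𝓝[>] (0:ℝ), zf τ / a (zf τ) ≤ 0 := by
        filter_upwards [hzfbot.eventually (eventually_le_atBot (-1))] with τ h
        exact div_nonpos_of_nonpos_of_nonneg (by linarith) (hapos' _).le
      have hκle : κ ≤ 0 := le_of_tendsto hκ hneg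
      rcases eq_or_lt_of_le hκle with h|h
      · exact h
      · exfalso
        have hκne : κ ≠ 0 := ne_of_lt h
        have hainv : Tendsto (fun τ => a (zf τ) / zf τ) (𝓝[>] (0:ℝ)) (𝓝 κ⁻¹) := by
          have hh := hκ.inv₀ hκne
          refine hh.congr (fun τ => ?_)
          rw [inv_div]
        have hwz : Tendsto (fun τ => 1 + (-2*κ) * (a (zf τ) / zf τ)) (𝓝[>] (0:ℝ))
            (𝓝 (-1)) := by
          have h2 : Tendsto (fun τ => 1 + (-2*κ) * (a (zf τ) / zf τ)) (𝓝[>] (0:ℝ))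
              (𝓝 (1 + (-2*κ) * κ⁻¹)) := tendsto_const_nhds.add (hainv.const_mul _)
          have h3 : 1 + (-2*κ) * κ⁻¹ = -1 := by
            rw [mul_assoc, mul_inv_cancel₀ hκne]; norm_num
          rwa [h3] at h2
        have hwtop : Tendsto (fun τ => zf τ + (-2*κ) * a (zf τ)) (𝓝[>] (0:ℝ)) atTop := by
          have hmul := Tendsto.atBot_mul_neg (show (-1:ℝ) < 0 by norm_num) hzfbot hwz
          refine hmul.congr' ?_
          filter_upwards [hzfbot.eventually (eventually_le_atBot (-1))] with τ hle
          have hzne : zf τ ≠ 0 := by intro hc; rw [hc] at hle; linarith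
          field_simp
        have hge1 : ∀ᶠ τ in 𝓝[>] (0:ℝ),
            Fu 1 / Fu (zf τ) ≤ Fu (zf τ + (-2*κ) * a (zf τ)) / Fu (zf τ) := by
          filter_upwards [hwtop.eventually (eventually_ge_atTop 1)] with τ h
          have hmono := hFumono h
          have hden := hpos (zf τ)
          gcongr
        have hinvtop : Tendsto (fun τ => Fu 1 / Fu (zf τ)) (𝓝[>] (0:ℝ)) atTop := by
          have hz0 : Tendsto (fun τ => Fu (zf τ)) (𝓝[>] (0:ℝ)) (𝓝[>] (0:ℝ)) := by
            rw [tendsto_nhdsWithin_iff]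
            exact ⟨hFuzf, Filter.Eventually.of_forall (fun τ => hpos _)⟩
          have hcomp := tendsto_inv_nhdsGT_zero.comp hz0
          have h2 := Tendsto.const_mul_atTop (hpos 1) hcomp
          refine h2.congr (fun τ => ?_)
          rw [Function.comp_apply, ← div_eq_mul_inv]
        have hrtop : Tendsto (fun τ => Fu (zf τ + (-2*κ) * a (zf τ)) / Fu (zf τ))
            (𝓝[>] (0:ℝ)) atTop := tendsto_atTop_mono' _ hge1 hinvtop
        exact not_tendsto_nhds_of_tendsto_atTop hrtop _ ((htail1 (-2*κ)).comp hzfbot)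
    exact main_core d hd0 Xs η hη.1 γ F hFmono hlin Fu K hKpos a _ htail1 htaileq zf
      hzfdef hzfbot hWt hWp hapos2 hqfacts hzero
end

section
/- (Theorem 3.1, type 2 tails) Under the linear quantile regression setup with type 2 tails of index ξ > 0, there exists a vector c ∈ ℝ^d with μ_Xᵀc = 1 such that xᵀc > 0 and K(x) = (xᵀc)^{1/ξ} for every x ∈ 𝐗. -/
open MeasureTheory Filter Topology Real Set

/-- Generalized inverse. -/
noncomputable def qinv (G : ℝ → ℝ) (t : ℝ) : ℝ := sInf {z | t < G z}

lemma qinv_bddBelow {G : ℝ → ℝ} (hmono : Monotone G) (htd : Tendsto G atBot (𝓝 0))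
    {t : ℝ} (ht : 0 < t) : BddBelow {z | t < G z} := by
  obtain ⟨z0, hz0⟩ := eventually_atBot.mp (htd.eventually_lt_const ht)
  exact ⟨z0, fun s hs => not_lt.1 fun h => lt_irrefl t (hs.trans (hz0 s h.le))⟩

lemma qinv_le_of_mem {G : ℝ → ℝ} (hmono : Monotone G) (htd : Tendsto G atBot (𝓝 0))
    {t z : ℝ} (ht : 0 < t) (hz : t < G z) : qinv G t ≤ z :=
  csInf_le (qinv_bddBelow hmono htd ht) hz

lemma lt_of_qinv_lt {G : ℝ → ℝ} (hmono : Monotone G) (htd : Tendsto G atBot (𝓝 0))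
    {t z : ℝ} (ht : 0 < t) (ht' : t < G 0) (h : qinv G t < z) : t < G z := by
  obtain ⟨s, hs, hsz⟩ := (csInf_lt_iff (qinv_bddBelow hmono htd ht) ⟨0, ht'⟩).mp h
  exact lt_of_lt_of_le hs (hmono hsz.le)

lemma le_qinv_apply {G : ℝ → ℝ} (hmono : Monotone G)
    (hrc : ∀ z : ℝ, ContinuousWithinAt G (Set.Ici z) z)
    (htd : Tendsto G atBot (𝓝 0)) {t : ℝ} (ht : 0 < t) (ht' : t < G 0) :
    t ≤ G (qinv G t) := by
  have h1 : Tendsto G (𝓝[>] (qinv G t)) (𝓝 (G (qinv G t))) :=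
    (hrc (qinv G t)).mono_left (nhdsWithin_mono _ Set.Ioi_subset_Ici_self)
  refine ge_of_tendsto h1 ?_
  filter_upwards [self_mem_nhdsWithin] with z hz
  exact (lt_of_qinv_lt hmono htd ht ht' hz).le

lemma apply_le_of_lt_qinv {G : ℝ → ℝ} (hmono : Monotone G) (htd : Tendsto G atBot (𝓝 0))
    {t z : ℝ} (ht : 0 < t) (h : z < qinv G t) : G z ≤ t :=
  not_lt.1 fun hc => absurd (qinv_le_of_mem hmono htd ht hc) (not_le.2 h)

lemma qinv_tendsto_atBot {G : ℝ → ℝ} (hmono : Monotone G) (htd : Tendsto G atBot (𝓝 0))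
    (hGpos : ∀ z : ℝ, 0 < G z) :
    Tendsto (qinv G) (𝓝[>] (0:ℝ)) atBot := by
  rw [tendsto_atBot]
  intro M
  have hmem : Ioo (0:ℝ) (G M) ∈ 𝓝[>] (0:ℝ) := Ioo_mem_nhdsGT_of_mem ⟨le_refl 0, hGpos M⟩
  filter_upwards [hmem] with τ hτ
  exact qinv_le_of_mem hmono htd hτ.1 hτ.2

lemma tendsto_zero_of_reg {G : ℝ → ℝ} (hmono : Monotone G) (hGpos : ∀ z : ℝ, 0 < G z)
    {ξ : ℝ} (hξ : 0 < ξ)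
    (hreg2 : Tendsto (fun z => G (2 * z) / G z) atBot (𝓝 ((2:ℝ) ^ (-1/ξ)))) :
    Tendsto G atBot (𝓝 0) := by
  have hbdd : BddBelow (Set.range G) := ⟨0, by rintro _ ⟨z, rfl⟩; exact (hGpos z).le⟩
  have h1 : Tendsto G atBot (𝓝 (⨅ z, G z)) := tendsto_atBot_ciInf hmono hbdd
  set L := ⨅ z, G z with hL
  have hL0 : 0 ≤ L := le_ciInf fun z => (hGpos z).le
  rcases eq_or_lt_of_le hL0 with h | h
  · rwa [← h] at h1
  · exfalso
    have hmul : Tendsto (fun z : ℝ => 2 * z) atBot atBot :=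
      (tendsto_const_mul_atBot_of_pos two_pos).2 tendsto_id
    have h2 : Tendsto (fun z => G (2 * z)) atBot (𝓝 L) := h1.comp hmul
    have h3 : Tendsto (fun z => G (2 * z) / G z) atBot (𝓝 (L / L)) := h2.div h1 h.ne'
    rw [div_self h.ne'] at h3
    have := tendsto_nhds_unique h3 hreg2
    have hlt : (2:ℝ) ^ (-1/ξ) < 1 := by
      apply Real.rpow_lt_one_of_one_lt_of_neg one_lt_two
      rw [neg_div]
      exact neg_neg_of_pos (by positivity)
    rw [← this] at hlt
    exact lt_irrefl _ hlt
section Ratio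

variable {G : ℝ → ℝ} (hmono : Monotone G)
    (hrc : ∀ z : ℝ, ContinuousWithinAt G (Set.Ici z) z)
    (hGpos : ∀ z : ℝ, 0 < G z) (htd : Tendsto G atBot (𝓝 0))
    {ξ : ℝ} (hξ : 0 < ξ)
    (hreg : ∀ v > (0:ℝ), Tendsto (fun z => G (v * z) / G z) atBot (𝓝 (v ^ (-1/ξ))))

include hmono hrc hGpos htd hξ hreg in
lemma qinv_ratio {l : ℝ} (hl : 0 < l) :
    Tendsto (fun τ => qinv G (l * τ) / qinv G τ) (𝓝[>] (0:ℝ)) (𝓝 (l ^ (-ξ))) := by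
  have hlx : (0:ℝ) < l ^ (-ξ) := Real.rpow_pos_of_pos hl _
  have hexp : -1/ξ < 0 := by rw [neg_div]; exact neg_neg_of_pos (by positivity)
  have hpowpow : ((l ^ (-ξ) : ℝ)) ^ (-1/ξ) = l := by
    rw [← Real.rpow_mul hl.le]
    rw [show (-ξ) * (-1/ξ) = 1 by field_simp]
    exact Real.rpow_one l
  -- eventual facts
  have ev_pos : ∀ᶠ τ in 𝓝[>] (0:ℝ), 0 < τ := self_mem_nhdsWithin
  have hid : Tendsto (fun τ : ℝ => τ) (𝓝[>] (0:ℝ)) (𝓝 0) :=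
    tendsto_id.mono_left nhdsWithin_le_nhds
  have ev_lt : ∀ᶠ τ in 𝓝[>] (0:ℝ), τ < G 0 := hid.eventually_lt_const (hGpos 0)
  have ev_ltl : ∀ᶠ τ in 𝓝[>] (0:ℝ), l * τ < G 0 := by
    have h2 : Tendsto (fun τ : ℝ => l * τ) (𝓝[>] (0:ℝ)) (𝓝 0) := by
      simpa using hid.const_mul l
    exact h2.eventually_lt_const (hGpos 0)
  have ev_q_le : ∀ M : ℝ, ∀ᶠ τ in 𝓝[>] (0:ℝ), qinv G τ ≤ M :=
    fun M => tendsto_atBot.1 (qinv_tendsto_atBot hmono htd hGpos) M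
  rw [tendsto_order]
  constructor
  · -- lower bound
    intro a ha
    set u : ℝ := (max a 0 + l ^ (-ξ)) / 2 with hu
    have hmax : max a 0 < l ^ (-ξ) := max_lt ha hlx
    have hu0 : 0 < u := by
      have : (0:ℝ) ≤ max a 0 := le_max_right a 0
      rw [hu]; positivity
    have hua : a < u := lt_of_le_of_lt (le_max_left a 0) (by rw [hu]; linarith)
    have hul : u < l ^ (-ξ) := by rw [hu]; linarith
    have hkey : l < u ^ (-1/ξ) := by
      have h := Real.rpow_lt_rpow_of_neg hu0 hul hexp
      rwa [hpowpow] at h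
    set lam : ℝ := (l + u ^ (-1/ξ)) / 2 with hlam
    have hlam1 : l < lam := by rw [hlam]; linarith
    have hlam2 : lam < u ^ (-1/ξ) := by rw [hlam]; linarith
    obtain ⟨z2, hz2⟩ := eventually_atBot.mp ((hreg u hu0).eventually_const_lt hlam2)
    filter_upwards [ev_pos, ev_lt, ev_ltl, ev_q_le (min z2 (-1))] with τ hτ hτG hlτG hq
    have hlτ : 0 < l * τ := mul_pos hl hτ
    have hqneg : qinv G τ < 0 := lt_of_le_of_lt hq (lt_of_le_of_lt (min_le_right _ _) (by norm_num))
    have hqz2 : qinv G τ ≤ z2 := le_trans hq (min_le_left _ _)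
    have h1 : τ ≤ G (qinv G τ) := le_qinv_apply hmono hrc htd hτ hτG
    have h2 : lam < G (u * qinv G τ) / G (qinv G τ) := hz2 _ hqz2
    have h3 : l * τ < G (u * qinv G τ) := by
      have := (lt_div_iff₀ (hGpos (qinv G τ))).mp h2
      calc l * τ < lam * τ := by nlinarith
        _ ≤ lam * G (qinv G τ) := by nlinarith
        _ < G (u * qinv G τ) := this
    have h4 : qinv G (l * τ) ≤ u * qinv G τ := qinv_le_of_mem hmono htd hlτ h3
    have h5 : u ≤ qinv G (l * τ) / qinv G τ := (le_div_iff_of_neg hqneg).2 h4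
    exact lt_of_lt_of_le hua h5
  · -- upper bound
    intro b hb
    set u : ℝ := (l ^ (-ξ) + b) / 2 with hu
    have hu0 : 0 < u := by rw [hu]; linarith
    have hlu : l ^ (-ξ) < u := by rw [hu]; linarith
    have hub : u < b := by rw [hu]; linarith
    have hkey : u ^ (-1/ξ) < l := by
      have h := Real.rpow_lt_rpow_of_neg hlx hlu hexp
      rwa [hpowpow] at h
    obtain ⟨z1, hz1⟩ := eventually_atBot.mp ((hreg u hu0).eventually_lt_const hkey)
    filter_upwards [ev_pos, ev_lt, ev_ltl, ev_q_le (min z1 (-1))] with τ hτ hτG hlτG hq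
    have hlτ : 0 < l * τ := mul_pos hl hτ
    have hqneg : qinv G τ < 0 := lt_of_le_of_lt hq (lt_of_le_of_lt (min_le_right _ _) (by norm_num))
    have hqz1 : qinv G τ ≤ z1 := le_trans hq (min_le_left _ _)
    -- claim : u * qinv G τ ≤ qinv G (l * τ)
    have hclaim : ∀ δ : ℝ, 0 < δ → u * (qinv G τ - δ) < qinv G (l * τ) := by
      intro δ hδ
      set z : ℝ := qinv G τ - δ with hz
      have hzlt : z < qinv G τ := by rw [hz]; linarith
      have hGz : G z ≤ τ := apply_le_of_lt_qinv hmono htd hτ hzlt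
      have hzz1 : z ≤ z1 := le_of_lt (lt_of_lt_of_le hzlt hqz1)
      have h6 : G (u * z) / G z < l := hz1 z hzz1
      have h7 : G (u * z) < l * τ := by
        have := (div_lt_iff₀ (hGpos z)).mp h6
        nlinarith [hGpos z]
      by_contra hcon
      push_neg at hcon
      have h8 : l * τ ≤ G (u * z) :=
        le_trans (le_qinv_apply hmono hrc htd hlτ hlτG) (hmono hcon)
      linarith
    have h9 : u * qinv G τ ≤ qinv G (l * τ) := by
      by_contra hcon
      push_neg at hcon
      set δ : ℝ := (u * qinv G τ - qinv G (l * τ)) / (2 * u) with hδdef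
      have hδ : 0 < δ := by
        rw [hδdef]
        apply div_pos (by linarith) (by positivity)
      have := hclaim δ hδ
      have heq : u * (qinv G τ - δ) = (u * qinv G τ + qinv G (l * τ)) / 2 := by
        rw [hδdef]; field_simp; ring
      rw [heq] at this
      linarith
    have h10 : qinv G (l * τ) / qinv G τ ≤ u := (div_le_iff_of_neg hqneg).2 (by linarith)
    exact lt_of_le_of_lt h10 hub

end Ratio
section Sandwich

variable {G : ℝ → ℝ} (hmono : Monotone G)
    (hrc : ∀ z : ℝ, ContinuousWithinAt G (Set.Ici z) z)
    (hGpos : ∀ z : ℝ, 0 < G z) (htd : Tendsto G atBot (𝓝 0))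
    {ξ : ℝ} (hξ : 0 < ξ)
    (hreg : ∀ v > (0:ℝ), Tendsto (fun z => G (v * z) / G z) atBot (𝓝 (v ^ (-1/ξ))))

include hmono hrc hGpos htd hξ hreg in
lemma qdiv_ratio {m : ℝ} (hm : 0 < m) :
    Tendsto (fun τ => qinv G (τ / m) / qinv G τ) (𝓝[>] (0:ℝ)) (𝓝 (m ^ ξ)) := by
  have h := qinv_ratio hmono hrc hGpos htd hξ hreg (inv_pos.2 hm)
  have he : (m⁻¹ : ℝ) ^ (-ξ) = m ^ ξ := by
    rw [Real.inv_rpow hm.le, ← Real.rpow_neg hm.le, neg_neg]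
  rw [he] at h
  refine h.congr fun τ => ?_
  rw [inv_mul_eq_div]

include hmono hrc hGpos htd hξ hreg in
lemma qx_ratio {Fx : ℝ → ℝ} {k : ℝ} (hk : 0 < k)
    (htail : Tendsto (fun z => Fx z / G z) atBot (𝓝 k)) :
    Tendsto (fun τ => qinv Fx τ / qinv G τ) (𝓝[>] (0:ℝ)) (𝓝 (k ^ ξ)) := by
  have hcont : ContinuousAt (fun t : ℝ => t ^ ξ) k :=
    Real.continuousAt_rpow_const k ξ (Or.inl hk.ne')
  have ev_pos : ∀ᶠ τ in 𝓝[>] (0:ℝ), 0 < τ := self_mem_nhdsWithin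
  have hid : Tendsto (fun τ : ℝ => τ) (𝓝[>] (0:ℝ)) (𝓝 0) :=
    tendsto_id.mono_left nhdsWithin_le_nhds
  -- upper tail bound with margin 1 (used for BddBelow)
  obtain ⟨w0, hw0⟩ := eventually_atBot.mp (htail.eventually_lt_const (lt_add_one k))
  have hub : ∀ z ≤ w0, Fx z < (k + 1) * G z := by
    intro z hz
    have := hw0 z hz
    have := hGpos z
    nlinarith [(div_lt_iff₀ (hGpos z)).mp (hw0 z hz)]
  have hq_le : ∀ M : ℝ, ∀ᶠ τ in 𝓝[>] (0:ℝ), qinv G τ ≤ M :=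
    fun M => tendsto_atBot.1 (qinv_tendsto_atBot hmono htd hGpos) M
  have hdiv_ev : ∀ m : ℝ, 0 < m → ∀ M : ℝ, ∀ᶠ τ in 𝓝[>] (0:ℝ), qinv G (τ / m) ≤ M := by
    intro m hm M
    have h1 : Tendsto (fun τ : ℝ => τ / m) (𝓝[>] (0:ℝ)) (𝓝[>] (0:ℝ)) := by
      rw [tendsto_nhdsWithin_iff]
      constructor
      · simpa using hid.div_const m
      · filter_upwards [ev_pos] with τ hτ; exact div_pos hτ hm
    exact tendsto_atBot.1 ((qinv_tendsto_atBot hmono htd hGpos).comp h1) M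
  have hdiv_lt : ∀ m : ℝ, 0 < m → ∀ᶠ τ in 𝓝[>] (0:ℝ), 0 < τ / m ∧ τ / m < G 0 := by
    intro m hm
    have h2 : Tendsto (fun τ : ℝ => τ / m) (𝓝[>] (0:ℝ)) (𝓝 0) := by
      simpa using hid.div_const m
    filter_upwards [ev_pos, h2.eventually_lt_const (hGpos 0)] with τ h1 h3
    exact ⟨div_pos h1 hm, h3⟩
  rw [tendsto_order]
  constructor
  · -- lower: a < k ^ ξ
    intro a ha
    have hev : ∀ᶠ t : ℝ in 𝓝 k, a < t ^ ξ := hcont.eventually_const_lt ha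
    obtain ⟨δ, hδ0, hδ⟩ := Metric.eventually_nhds_iff.mp hev
    set ε : ℝ := min (δ / 2) (k / 2) with hε
    have hε0 : 0 < ε := by rw [hε]; positivity
    have hεk : ε < k := lt_of_le_of_lt (min_le_right _ _) (by linarith)
    have hεδ : ε < δ := lt_of_le_of_lt (min_le_left _ _) (by linarith)
    have hgoal : a < (k - ε) ^ ξ := hδ (by rw [Real.dist_eq]; rw [abs_sub_lt_iff]; constructor <;> linarith)
    have hkε : 0 < k - ε := by linarith
    -- tail lower bound
    obtain ⟨w1, hw1⟩ := eventually_atBot.mp (htail.eventually_const_lt (by linarith : k - ε < k))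
    have hlb : ∀ z ≤ w1, (k - ε) * G z < Fx z := by
      intro z hz
      nlinarith [(lt_div_iff₀ (hGpos z)).mp (hw1 z hz), hGpos z]
    set z0 : ℝ := min (min w0 w1) (-1) with hz0
    have hz0w0 : z0 ≤ w0 := le_trans (min_le_left _ _) (min_le_left _ _)
    have hz0w1 : z0 ≤ w1 := le_trans (min_le_left _ _) (min_le_right _ _)
    have hz0neg : z0 < 0 := lt_of_le_of_lt (min_le_right _ _) (by norm_num)
    -- limit of comparison ratio
    have hlim := qdiv_ratio hmono hrc hGpos htd hξ hreg hkε
    have hlim' : ∀ᶠ τ in 𝓝[>] (0:ℝ), a < qinv G (τ / (k - ε)) / qinv G τ :=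
      hlim.eventually_const_lt hgoal
    filter_upwards [ev_pos, hlim', hdiv_ev (k - ε) hkε (z0 - 1), hdiv_lt (k - ε) hkε,
      hdiv_lt (k + 1) (by linarith), hq_le (-1)] with τ hτ hra hqz0 hσ' hσ hqτ
    have hqτneg : qinv G τ < 0 := lt_of_le_of_lt hqτ (by norm_num)
    -- show qinv Fx τ ≤ qinv G (τ / (k - ε))
    set A : ℝ := qinv G (τ / (k - ε)) with hA
    have hmemx : ∀ z : ℝ, A < z → z ≤ z0 → τ < Fx z := by
      intro z h1 h2
      have h3 : τ / (k - ε) < G z := lt_of_qinv_lt hmono htd hσ'.1 hσ'.2 h1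
      have h4 : τ < (k - ε) * G z := by nlinarith [(div_lt_iff₀ hkε).mp h3]
      exact lt_trans h4 (hlb z (le_trans h2 hz0w1))
    -- BddBelow {z | τ < Fx z}
    obtain ⟨b0, hb0⟩ := qinv_bddBelow hmono htd hσ.1 (t := τ / (k + 1))
    have hbdd : BddBelow {z | τ < Fx z} := by
      refine ⟨min b0 z0, fun s hs => ?_⟩
      rcases le_or_gt s z0 with h | h
      · have h5 : τ < (k + 1) * G s := lt_trans hs (hub s (le_trans h hz0w0))
        have h6 : τ / (k + 1) < G s := (div_lt_iff₀ (by linarith : (0:ℝ) < k + 1)).mpr (by linarith)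
        exact le_trans (min_le_left _ _) (hb0 h6)
      · exact le_trans (min_le_right _ _) h.le
    have hled : qinv Fx τ ≤ A := by
      have hAz0 : A < z0 := by linarith
      by_contra hcon
      push_neg at hcon
      set z : ℝ := min ((A + qinv Fx τ) / 2) z0 with hzdef
      have hz1 : A < z := lt_min (by linarith) hAz0
      have hz2 : z ≤ z0 := min_le_right _ _
      have hmem : τ < Fx z := hmemx z hz1 hz2
      have : qinv Fx τ ≤ z := csInf_le hbdd hmem
      have : qinv Fx τ ≤ (A + qinv Fx τ) / 2 := le_trans this (min_le_left _ _)
      linarith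
    have : A / qinv G τ ≤ qinv Fx τ / qinv G τ := (div_le_div_right_of_neg hqτneg).2 hled
    exact lt_of_lt_of_le hra this
  · -- upper: k ^ ξ < b
    intro b hb
    have hev : ∀ᶠ t : ℝ in 𝓝 k, t ^ ξ < b := hcont.eventually_lt_const hb
    obtain ⟨δ, hδ0, hδ⟩ := Metric.eventually_nhds_iff.mp hev
    set ε : ℝ := δ / 2 with hε
    have hε0 : 0 < ε := by rw [hε]; positivity
    have hgoal : (k + ε) ^ ξ < b := hδ (by rw [Real.dist_eq, abs_sub_lt_iff]; constructor <;> linarith)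
    have hkε : 0 < k + ε := by linarith
    obtain ⟨w1, hw1⟩ := eventually_atBot.mp (htail.eventually_lt_const (by linarith : k < k + ε))
    have hub2 : ∀ z ≤ w1, Fx z < (k + ε) * G z := by
      intro z hz
      nlinarith [(div_lt_iff₀ (hGpos z)).mp (hw1 z hz), hGpos z]
    set z0 : ℝ := min w1 (-1) with hz0
    have hz0w1 : z0 ≤ w1 := min_le_left _ _
    have hz0neg : z0 < 0 := lt_of_le_of_lt (min_le_right _ _) (by norm_num)
    have hlim := qdiv_ratio hmono hrc hGpos htd hξ hreg hkε
    have hlim' : ∀ᶠ τ in 𝓝[>] (0:ℝ), qinv G (τ / (k + ε)) / qinv G τ < b :=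
      hlim.eventually_lt_const hgoal
    filter_upwards [ev_pos, hlim', hdiv_ev (k + ε) hkε z0, hdiv_lt (k + ε) hkε,
      hq_le (-1)] with τ hτ hrb hqz0 hσ hqτ
    have hqτneg : qinv G τ < 0 := lt_of_le_of_lt hqτ (by norm_num)
    set A : ℝ := qinv G (τ / (k + ε)) with hA
    have hge : A ≤ qinv Fx τ := by
      rcases Set.eq_empty_or_nonempty {z | τ < Fx z} with hemp | hne
      · rw [qinv, hemp, Real.sInf_empty]
        linarith
      · refine le_csInf hne fun s hs => ?_
        rcases le_or_gt s z0 with h | h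
        · have h5 : τ < (k + ε) * G s := lt_trans hs (hub2 s (le_trans h hz0w1))
          have h6 : τ / (k + ε) < G s := (div_lt_iff₀ hkε).mpr (by linarith)
          exact qinv_le_of_mem hmono htd hσ.1 h6
        · linarith
    have : qinv Fx τ / qinv G τ ≤ A / qinv G τ := (div_le_div_right_of_neg hqτneg).2 hge
    exact lt_of_le_of_lt this hrb

end Sandwich
theorem extremal_qr_thm31_type2
    (d : ℕ) (hd : 1 ≤ d)
    (μ : Measure (Fin d → ℝ)) [IsProbabilityMeasure μ]
    (Xs : Set (Fin d → ℝ))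
    (hXssupp : ∀ x, x ∈ Xs ↔ ∀ U ∈ 𝓝 x, 0 < μ U)
    (hXscpt : IsCompact Xs)
    (hposdef : (Matrix.of fun i j : Fin d => ∫ x, x i * x j ∂μ).PosDef)
    (hmean : ∀ i : Fin d, (∫ x, x i ∂μ) = if (i : ℕ) = 0 then (1:ℝ) else 0)
    (η : ℝ) (hη : η ∈ Set.Ioc (0:ℝ) 1)
    (γ : ℝ → Fin d → ℝ)
    (F : (Fin d → ℝ) → ℝ → ℝ)
    (hFmono : ∀ x ∈ Xs, Monotone (F x))
    (hFrc : ∀ x ∈ Xs, ∀ z : ℝ, ContinuousWithinAt (F x) (Set.Ici z) z)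
    (hFrange : ∀ x ∈ Xs, ∀ z : ℝ, F x z ∈ Set.Icc (0:ℝ) 1)
    (hlin : ∀ τ ∈ Set.Ioc (0:ℝ) η, ∀ x ∈ Xs, sInf {z | τ < F x z} = ∑ i, x i * γ τ i)
    (Fu : ℝ → ℝ)
    (hFumono : Monotone Fu)
    (hFurc : ∀ z : ℝ, ContinuousWithinAt Fu (Set.Ici z) z)
    (hFurange : ∀ z : ℝ, Fu z ∈ Set.Icc (0:ℝ) 1)
    (hFuinv : ∀ τ ∈ Set.Ioc (0:ℝ) η, sInf {z | τ < Fu z} = ∑ i, (∫ x, x i ∂μ) * γ τ i)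
    (K : (Fin d → ℝ) → ℝ)
    (hKcont : ContinuousOn K Xs)
    (hKbdd : BddAbove (K '' Xs))
    (hKpos : ∀ x ∈ Xs, 0 < K x)
    (ξ : ℝ) (hξ : 0 < ξ)
    (hFupos : ∀ z : ℝ, 0 < Fu z)
    (hreg : ∀ v > (0:ℝ), Tendsto (fun z => Fu (v * z) / Fu z) atBot (𝓝 (v ^ (-1/ξ))))
    (htaileq : TendstoUniformlyOn (fun z x => F x z / Fu z) K atBot Xs)
    :
    ∃ c : Fin d → ℝ, (∑ i, (∫ x, x i ∂μ) * c i) = 1 ∧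
      (∀ x ∈ Xs, 0 < (∑ i, x i * c i) ∧ K x = (∑ i, x i * c i) ^ (1/ξ)) := by
  haveI : NeZero d := ⟨Nat.one_le_iff_ne_zero.mp hd⟩
  have hη0 : 0 < η := hη.1
  have htd : Tendsto Fu atBot (𝓝 0) :=
    tendsto_zero_of_reg hFumono hFupos hξ (hreg 2 two_pos)
  -- the complement of the support is null
  have hcompl : μ Xsᶜ = 0 := by
    set S : Set (Set (Fin d → ℝ)) := {U | IsOpen U ∧ μ U = 0} with hS
    obtain ⟨S', hS'c, hS'sub, hS'eq⟩ :=
      TopologicalSpace.isOpen_sUnion_countable S (fun U hU => hU.1)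
    have hsub : Xsᶜ ⊆ ⋃₀ S := by
      intro x hx
      rw [Set.mem_compl_iff, hXssupp] at hx
      push_neg at hx
      obtain ⟨U, hU, hUz⟩ := hx
      have hUz' : μ U = 0 := le_antisymm (by simpa using hUz) zero_le
      obtain ⟨V, hVU, hVopen, hxV⟩ := mem_nhds_iff.mp hU
      exact ⟨V, ⟨hVopen, measure_mono_null hVU hUz'⟩, hxV⟩
    have hz : μ (⋃₀ S) = 0 := by
      rw [← hS'eq]
      exact (measure_sUnion_null_iff hS'c).2 fun s hs => (hS'sub hs).2
    exact measure_mono_null hsub hz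
  have hae : ∀ᵐ y ∂μ, y ∈ Xs := by
    rw [ae_iff]
    exact hcompl
  -- X spans
  have hspan : Submodule.span ℝ Xs = (⊤ : Submodule ℝ (Fin d → ℝ)) := by
    by_contra hne
    obtain ⟨f, hf0, hfbot⟩ :=
      Submodule.exists_dual_map_eq_bot_of_lt_top (lt_top_iff_ne_top.2 hne) inferInstance
    set v : Fin d → ℝ := fun i => f (fun j => if i = j then 1 else 0) with hv
    have hfv : ∀ u : Fin d → ℝ, f u = ∑ i, u i * v i := by
      intro u
      conv_lhs => rw [pi_eq_sum_univ u]
      rw [map_sum]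
      exact Finset.sum_congr rfl fun i _ => by rw [_root_.map_smul, smul_eq_mul]
    have hvanish : ∀ x ∈ Xs, ∑ i, x i * v i = 0 := by
      intro x hx
      rw [← hfv]
      have hmem : f x ∈ Submodule.map f (Submodule.span ℝ Xs) :=
        ⟨x, Submodule.subset_span hx, rfl⟩
      rw [hfbot] at hmem
      exact hmem
    have hvne : v ≠ 0 := by
      intro h
      apply hf0
      apply LinearMap.ext
      intro u
      rw [hfv u, h]
      simp
    -- integrability
    obtain ⟨R, hR⟩ := hXscpt.isBounded.subset_closedBall 0
    have hbound : ∀ i j : Fin d, ∀ᵐ y ∂μ, ‖y i * y j‖ ≤ R * R := by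
      intro i j
      filter_upwards [hae] with y hy
      have h1 : ‖y‖ ≤ R := by simpa [dist_eq_norm] using hR hy
      have h2 : |y i| ≤ R := le_trans (norm_le_pi_norm y i) h1
      have h3 : |y j| ≤ R := le_trans (norm_le_pi_norm y j) h1
      rw [norm_mul]
      exact mul_le_mul h2 h3 (abs_nonneg _) (le_trans (abs_nonneg _) h2)
    have hint : ∀ i j : Fin d, Integrable (fun y => y i * y j) μ := by
      intro i j
      exact Integrable.mono' (integrable_const (R * R))
        (((continuous_apply i).mul (continuous_apply j)).aestronglyMeasurable)
        (hbound i j)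
    have hquad := hposdef.dotProduct_mulVec_pos hvne
    have hquad0 : dotProduct (star v) (Matrix.mulVec (Matrix.of fun i j : Fin d => ∫ x, x i * x j ∂μ) v) = 0 := by
      have hrw : dotProduct (star v) (Matrix.mulVec (Matrix.of fun i j : Fin d => ∫ x, x i * x j ∂μ) v)
          = ∑ i, ∑ j, v i * v j * ∫ y, y i * y j ∂μ := by
        simp only [Matrix.mulVec, dotProduct, Matrix.of_apply, Pi.star_apply,
          star_trivial, Finset.mul_sum]
        exact Finset.sum_congr rfl fun i _ => Finset.sum_congr rfl fun j _ => by ring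
      rw [hrw]
      have hint2 : ∀ i j : Fin d, Integrable (fun y => (v i * y i) * (v j * y j)) μ := by
        intro i j
        have he : (fun y : Fin d → ℝ => (v i * y i) * (v j * y j))
            = fun y => (v i * v j) * (y i * y j) := by funext y; ring
        rw [he]
        exact (hint i j).const_mul _
      have hswap : ∀ i j : Fin d,
          v i * v j * ∫ y, y i * y j ∂μ = ∫ y, (v i * y i) * (v j * y j) ∂μ := by
        intro i j
        rw [← integral_const_mul]
        congr 1
        ext y
        ring
      calc (∑ i, ∑ j, v i * v j * ∫ y, y i * y j ∂μ)
          = ∑ i, ∑ j, ∫ y, (v i * y i) * (v j * y j) ∂μ := by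
            exact Finset.sum_congr rfl fun i _ => Finset.sum_congr rfl fun j _ => hswap i j
        _ = ∑ i, ∫ y, ∑ j, (v i * y i) * (v j * y j) ∂μ :=
            Finset.sum_congr rfl fun i _ => (integral_finset_sum _ fun j _ => hint2 i j).symm
        _ = ∫ y, ∑ i, ∑ j, (v i * y i) * (v j * y j) ∂μ :=
            (integral_finset_sum _ fun i _ => integrable_finset_sum _ fun j _ => hint2 i j).symm
        _ = 0 := by
            refine integral_eq_zero_of_ae ?_
            filter_upwards [hae] with y hy
            have := hvanish y hy
            have hsq : ∑ i, ∑ j, (v i * y i) * (v j * y j)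
                = (∑ i, y i * v i) * (∑ j, y j * v j) := by
              rw [Finset.sum_mul_sum]
              exact Finset.sum_congr rfl fun i _ => Finset.sum_congr rfl fun j _ => by ring
            rw [hsq, this, zero_mul]; simp
    rw [hquad0] at hquad
    exact lt_irrefl _ hquad
  -- quantile identities on (0, η]
  have hq0 : ∀ τ ∈ Set.Ioc (0:ℝ) η, qinv Fu τ = γ τ 0 := by
    intro τ hτ
    have h1 : ∀ i : Fin d, (∫ x, x i ∂μ) * γ τ i = if i = 0 then γ τ i else 0 := by
      intro i
      rw [hmean i]
      by_cases h : i = 0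
      · rw [if_pos (by simp [h]), if_pos h, one_mul]
      · rw [if_neg (fun hc => h (Fin.ext (by simpa using hc))), if_neg h, zero_mul]
    have h2 : qinv Fu τ = ∑ i, (∫ x, x i ∂μ) * γ τ i := hFuinv τ hτ
    rw [h2, Finset.sum_congr rfl fun i _ => h1 i, Finset.sum_ite_eq' Finset.univ 0]
    simp
  have hratioK : ∀ x ∈ Xs,
      Tendsto (fun τ => (∑ i, x i * γ τ i) / γ τ 0) (𝓝[>] (0:ℝ)) (𝓝 (K x ^ ξ)) := by
    intro x hx
    have h := qx_ratio hFumono hFurc hFupos htd hξ hreg (hKpos x hx) (htaileq.tendsto_at hx)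
    refine Tendsto.congr' ?_ h
    filter_upwards [Ioc_mem_nhdsGT hη0] with τ hτ
    rw [show qinv (F x) τ = ∑ i, x i * γ τ i from hlin τ hτ x hx, hq0 τ hτ]
  -- existence of limits for all directions
  have hP : ∀ w : Fin d → ℝ, ∃ L : ℝ,
      Tendsto (fun τ => (∑ i, w i * γ τ i) / γ τ 0) (𝓝[>] (0:ℝ)) (𝓝 L) := by
    intro w
    have hw : w ∈ Submodule.span ℝ Xs := hspan ▸ Submodule.mem_top
    induction hw using Submodule.span_induction with
    | mem x hx => exact ⟨K x ^ ξ, hratioK x hx⟩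
    | zero => exact ⟨0, by simpa using (tendsto_const_nhds : Tendsto (fun _ : ℝ => (0:ℝ)) _ _)⟩
    | add x y hx hy hLx hLy =>
      obtain ⟨Lx, hLx⟩ := hLx
      obtain ⟨Ly, hLy⟩ := hLy
      refine ⟨Lx + Ly, (hLx.add hLy).congr fun τ => ?_⟩
      rw [← add_div]
      congr 1
      rw [← Finset.sum_add_distrib]
      exact Finset.sum_congr rfl fun i _ => by simp [add_mul]
    | smul a x hx hLx =>
      obtain ⟨L, hL⟩ := hLx
      refine ⟨a * L, (hL.const_mul a).congr fun τ => ?_⟩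
      rw [← mul_div_assoc, Finset.mul_sum]
      congr 1
      exact Finset.sum_congr rfl fun i _ => by simp [mul_assoc]
  have hPi : ∀ i : Fin d, ∃ L : ℝ,
      Tendsto (fun τ => γ τ i / γ τ 0) (𝓝[>] (0:ℝ)) (𝓝 L) := by
    intro i
    obtain ⟨L, hL⟩ := hP (fun j => if i = j then 1 else 0)
    refine ⟨L, hL.congr fun τ => ?_⟩
    congr 1
    simp [Finset.sum_ite_eq]
  choose c hc using hPi
  have hγ0neg : ∀ᶠ τ in 𝓝[>] (0:ℝ), γ τ 0 < 0 := by
    have hqb := tendsto_atBot.1 (qinv_tendsto_atBot hFumono htd hFupos) (-1)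
    filter_upwards [hqb, Ioc_mem_nhdsGT hη0] with τ h1 h2
    rw [← hq0 τ h2]
    linarith
  have hc0 : c 0 = 1 := by
    have h1 : Tendsto (fun τ => γ τ 0 / γ τ 0) (𝓝[>] (0:ℝ)) (𝓝 (c 0)) := hc 0
    have h2 : Tendsto (fun τ => γ τ 0 / γ τ 0) (𝓝[>] (0:ℝ)) (𝓝 1) := by
      refine Tendsto.congr' ?_ (tendsto_const_nhds : Tendsto (fun _ : ℝ => (1:ℝ)) _ _)
      filter_upwards [hγ0neg] with τ hτ
      rw [div_self hτ.ne]
    exact tendsto_nhds_unique h1 h2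
  have hfin : ∀ x ∈ Xs, (∑ i, x i * c i) = K x ^ ξ := by
    intro x hx
    have h1 : Tendsto (fun τ => (∑ i, x i * γ τ i) / γ τ 0) (𝓝[>] (0:ℝ))
        (𝓝 (∑ i, x i * c i)) := by
      have h2 := tendsto_finset_sum Finset.univ (fun i (_ : i ∈ Finset.univ) => (hc i).const_mul (x i))
      refine h2.congr fun τ => ?_
      rw [Finset.sum_div]
      exact Finset.sum_congr rfl fun i _ => (mul_div_assoc _ _ _).symm
    exact tendsto_nhds_unique h1 (hratioK x hx)
  refine ⟨c, ?_, fun x hx => ?_⟩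
  · have h1 : ∀ i : Fin d, (∫ x, x i ∂μ) * c i = if i = 0 then c i else 0 := by
      intro i
      rw [hmean i]
      by_cases h : i = 0
      · rw [if_pos (by simp [h]), if_pos h, one_mul]
      · rw [if_neg (fun hc' => h (Fin.ext (by simpa using hc'))), if_neg h, zero_mul]
    rw [Finset.sum_congr rfl fun i _ => h1 i, Finset.sum_ite_eq' Finset.univ 0]
    simp [hc0]
  · have h := hfin x hx
    have hpos : 0 < ∑ i, x i * c i := by
      rw [h]
      exact Real.rpow_pos_of_pos (hKpos x hx) ξ
    refine ⟨hpos, ?_⟩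
    rw [h, ← Real.rpow_mul (hKpos x hx).le, mul_one_div_cancel hξ.ne', Real.rpow_one]
end

section
/- (Theorem 3.1, type 3 tails) Under the linear quantile regression setup with type 3 tails of index ξ < 0, there exists a vector c ∈ ℝ^d with μ_Xᵀc = 1 such that xᵀc > 0 and K(x) = (xᵀc)^{1/ξ} for every x ∈ 𝐗. -/
open MeasureTheory Filter Topology Real


noncomputable def qaux (Fu : ℝ → ℝ) (τ : ℝ) : ℝ := sInf {z | τ < Fu z}

lemma Saux_nonneg {Fu : ℝ → ℝ} (hFu0 : ∀ z < (0:ℝ), Fu z = 0) {τ z : ℝ}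
    (hτ : 0 < τ) (hz : τ < Fu z) : 0 ≤ z := by
  by_contra h
  push_neg at h
  rw [hFu0 z h] at hz
  linarith

lemma Saux_bdd {Fu : ℝ → ℝ} (hFu0 : ∀ z < (0:ℝ), Fu z = 0) {τ : ℝ} (hτ : 0 < τ) :
    BddBelow {z | τ < Fu z} := ⟨0, fun _ hz => Saux_nonneg hFu0 hτ hz⟩

lemma qaux_le {Fu : ℝ → ℝ} (hFu0 : ∀ z < (0:ℝ), Fu z = 0) {τ z : ℝ}
    (hτ : 0 < τ) (hz : τ < Fu z) : qaux Fu τ ≤ z :=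
  csInf_le (Saux_bdd hFu0 hτ) hz

lemma Fu_le_of_lt_qaux {Fu : ℝ → ℝ} (hFu0 : ∀ z < (0:ℝ), Fu z = 0) {τ z : ℝ}
    (hτ : 0 < τ) (hz : z < qaux Fu τ) : Fu z ≤ τ := by
  by_contra h
  push_neg at h
  exact absurd (qaux_le hFu0 hτ h) (not_le.mpr hz)

lemma le_qaux {Fu : ℝ → ℝ} {τ a : ℝ} (h1 : τ < Fu 1)
    (h : ∀ z, τ < Fu z → a ≤ z) : a ≤ qaux Fu τ :=
  le_csInf ⟨1, h1⟩ fun z hz => h z hz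

lemma Fu_qaux_ge {Fu : ℝ → ℝ} (hFurc : ∀ z : ℝ, ContinuousWithinAt Fu (Set.Ici z) z)
    (hFu0 : ∀ z < (0:ℝ), Fu z = 0) {τ : ℝ} (hτ : 0 < τ) (h1 : τ < Fu 1) :
    τ ≤ Fu (qaux Fu τ) := by
  by_contra hc
  push_neg at hc
  have hev : ∀ᶠ w in 𝓝[Set.Ici (qaux Fu τ)] (qaux Fu τ), Fu w < τ :=
    (hFurc (qaux Fu τ)).eventually (eventually_lt_nhds hc)
  rw [eventually_nhdsWithin_iff, Metric.eventually_nhds_iff] at hev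
  obtain ⟨δ, hδ, hδ'⟩ := hev
  obtain ⟨z, hzS, hzlt⟩ := exists_lt_of_csInf_lt (s := {z | τ < Fu z}) ⟨1, h1⟩
    (lt_add_of_pos_right (qaux Fu τ) hδ)
  have hzge : qaux Fu τ ≤ z := csInf_le (Saux_bdd hFu0 hτ) hzS
  have hlt : Fu z < τ := hδ' (by rw [Real.dist_eq, abs_of_nonneg (by linarith)]; linarith) hzge
  have : τ < Fu z := hzS
  linarith

lemma le_qaux' {Fu : ℝ → ℝ} {τ a w : ℝ} (h1 : τ < Fu w)
    (h : ∀ z, τ < Fu z → a ≤ z) : a ≤ qaux Fu τ :=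
  le_csInf ⟨w, h1⟩ fun z hz => h z hz

lemma Fu_small {Fu : ℝ → ℝ} (hFumono : Monotone Fu) (hFurange : ∀ z : ℝ, Fu z ≤ 1)
    (hFupos : ∀ z > (0:ℝ), 0 < Fu z) {ξ : ℝ} (hξ : ξ < 0)
    (hreg : ∀ v > (0:ℝ), Tendsto (fun z => Fu (v * z) / Fu z) (𝓝[>] (0:ℝ)) (𝓝 (v ^ (-1/ξ))))
    {ε : ℝ} (hε : 0 < ε) : ∃ δ > 0, ∀ z ≤ δ, Fu z ≤ ε := by
  set ρ : ℝ := (2:ℝ)⁻¹ ^ (-1/ξ) with hρdef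
  have hρpos : 0 < ρ := Real.rpow_pos_of_pos (by norm_num) _
  have hexp : 0 < -1/ξ := by
    rw [div_pos_iff]; right; constructor <;> linarith
  have hρlt : ρ < 1 :=
    Real.rpow_lt_one (by norm_num) (by norm_num) hexp
  set ρ' : ℝ := (ρ + 1) / 2 with hρ'def
  have hρ'pos : 0 < ρ' := by positivity
  have hρ'lt1 : ρ' < 1 := by rw [hρ'def]; linarith
  have hρρ' : ρ < ρ' := by rw [hρ'def]; linarith
  have hev : ∀ᶠ z in 𝓝[>] (0:ℝ), Fu ((2:ℝ)⁻¹ * z) / Fu z < ρ' :=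
    (hreg (2:ℝ)⁻¹ (by norm_num)).eventually (eventually_lt_nhds hρρ')
  rw [eventually_nhdsWithin_iff, Metric.eventually_nhds_iff] at hev
  obtain ⟨z₂, hz₂pos, h2⟩ := hev
  set z₀ : ℝ := z₂ / 2 with hz₀def
  have hz₀pos : 0 < z₀ := by positivity
  have hkey : ∀ z, 0 < z → z < z₂ → Fu ((2:ℝ)⁻¹ * z) ≤ ρ' * Fu z := by
    intro z hz hzlt
    have h3 := h2 (by rw [Real.dist_eq, sub_zero, abs_of_pos hz]; exact hzlt) (Set.mem_Ioi.mpr hz)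
    have hFz : 0 < Fu z := hFupos z hz
    calc Fu ((2:ℝ)⁻¹ * z) = Fu ((2:ℝ)⁻¹ * z) / Fu z * Fu z := by field_simp
    _ ≤ ρ' * Fu z := mul_le_mul_of_nonneg_right h3.le hFz.le
  have hind : ∀ n : ℕ, Fu (z₀ / 2 ^ n) ≤ ρ' ^ n * Fu z₀ := by
    intro n
    induction n with
    | zero => simp
    | succ n ih =>
      have hw : 0 < z₀ / 2 ^ n := by positivity
      have hwlt : z₀ / 2 ^ n < z₂ := by
        rw [div_lt_iff₀ (by positivity)]
        have h1 : (1:ℝ) ≤ 2 ^ n := one_le_pow₀ (by norm_num)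
        nlinarith
      have := hkey _ hw hwlt
      have heq : (2:ℝ)⁻¹ * (z₀ / 2 ^ n) = z₀ / 2 ^ (n+1) := by ring
      rw [heq] at this
      calc Fu (z₀ / 2 ^ (n+1)) ≤ ρ' * Fu (z₀ / 2 ^ n) := this
      _ ≤ ρ' * (ρ' ^ n * Fu z₀) := by
          exact mul_le_mul_of_nonneg_left ih hρ'pos.le
      _ = ρ' ^ (n+1) * Fu z₀ := by ring
  obtain ⟨n, hn⟩ := exists_pow_lt_of_lt_one hε hρ'lt1
  refine ⟨z₀ / 2 ^ n, by positivity, fun z hz => ?_⟩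
  calc Fu z ≤ Fu (z₀ / 2 ^ n) := hFumono hz
  _ ≤ ρ' ^ n * Fu z₀ := hind n
  _ ≤ ρ' ^ n * 1 := mul_le_mul_of_nonneg_left (hFurange z₀) (by positivity)
  _ ≤ ε := by rw [mul_one]; exact hn.le

lemma qaux_pos {Fu : ℝ → ℝ} (hFumono : Monotone Fu) (hFurange : ∀ z : ℝ, Fu z ≤ 1)
    (hFupos : ∀ z > (0:ℝ), 0 < Fu z) {ξ : ℝ} (hξ : ξ < 0)
    (hreg : ∀ v > (0:ℝ), Tendsto (fun z => Fu (v * z) / Fu z) (𝓝[>] (0:ℝ)) (𝓝 (v ^ (-1/ξ))))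
    {τ w : ℝ} (hτ : 0 < τ) (h1 : τ < Fu w) : 0 < qaux Fu τ := by
  obtain ⟨δ, hδpos, hδ⟩ := Fu_small hFumono hFurange hFupos hξ hreg (half_pos hτ)
  have : δ ≤ qaux Fu τ := by
    refine le_qaux' h1 fun z hz => ?_
    by_contra h
    push_neg at h
    have := hδ z h.le
    linarith
  linarith

lemma qaux_tendsto {Fu : ℝ → ℝ} (hFumono : Monotone Fu) (hFurange : ∀ z : ℝ, Fu z ≤ 1)
    (hFupos : ∀ z > (0:ℝ), 0 < Fu z) (hFu0 : ∀ z < (0:ℝ), Fu z = 0) {ξ : ℝ} (hξ : ξ < 0)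
    (hreg : ∀ v > (0:ℝ), Tendsto (fun z => Fu (v * z) / Fu z) (𝓝[>] (0:ℝ)) (𝓝 (v ^ (-1/ξ)))) :
    Tendsto (qaux Fu) (𝓝[>] (0:ℝ)) (𝓝[>] (0:ℝ)) := by
  rw [tendsto_nhdsWithin_iff]
  constructor
  · rw [Metric.tendsto_nhds]
    intro ε hε
    set m : ℝ := min 1 (ε/2) with hm
    have hmpos : 0 < m := by positivity
    have hFm : 0 < Fu m := hFupos m hmpos
    filter_upwards [Ioo_mem_nhdsGT_of_mem (Set.mem_Ico.mpr ⟨le_refl (0:ℝ), hFm⟩)] with τ hτ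
    obtain ⟨hτpos, hτlt⟩ := hτ
    have hq_le : qaux Fu τ ≤ m := qaux_le hFu0 hτpos hτlt
    have hq_nonneg : 0 ≤ qaux Fu τ :=
      le_qaux' hτlt fun z hz => Saux_nonneg hFu0 hτpos hz
    rw [Real.dist_eq, sub_zero, abs_of_nonneg hq_nonneg]
    have : m ≤ ε/2 := min_le_right _ _
    linarith
  · have hF1 : 0 < Fu 1 := hFupos 1 one_pos
    filter_upwards [Ioo_mem_nhdsGT_of_mem (Set.mem_Ico.mpr ⟨le_refl (0:ℝ), hF1⟩)] with τ hτ
    exact Set.mem_Ioi.mpr (qaux_pos hFumono hFurange hFupos hξ hreg hτ.1 hτ.2)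

lemma ratio_upper {Fu : ℝ → ℝ} (hFumono : Monotone Fu) (hFurange : ∀ z : ℝ, Fu z ≤ 1)
    (hFupos : ∀ z > (0:ℝ), 0 < Fu z) (hFu0 : ∀ z < (0:ℝ), Fu z = 0)
    (hFurc : ∀ z : ℝ, ContinuousWithinAt Fu (Set.Ici z) z) {ξ : ℝ} (hξ : ξ < 0)
    (hreg : ∀ v > (0:ℝ), Tendsto (fun z => Fu (v * z) / Fu z) (𝓝[>] (0:ℝ)) (𝓝 (v ^ (-1/ξ))))
    {s v : ℝ} (hs : 0 < s) (hv : s ^ (-ξ) < v) :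
    ∀ᶠ τ in 𝓝[>] (0:ℝ), qaux Fu (s * τ) ≤ v * qaux Fu τ := by
  have hexp : 0 < -1/ξ := by rw [div_pos_iff]; right; constructor <;> linarith
  have hv0 : 0 < v := (Real.rpow_pos_of_pos hs _).trans hv
  have hlt : s < v ^ (-1/ξ) := by
    have h1 : (s ^ (-ξ)) ^ (-1/ξ) < v ^ (-1/ξ) :=
      Real.rpow_lt_rpow (Real.rpow_pos_of_pos hs _).le hv hexp
    have h2 : (s ^ (-ξ)) ^ (-1/ξ) = s := by
      rw [← Real.rpow_mul hs.le]
      have : (-ξ) * (-1/ξ) = 1 := by field_simp [div_self hξ.ne]; exact div_self hξ.ne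
      rw [this, Real.rpow_one]
    rwa [h2] at h1
  have hev1 : ∀ᶠ z in 𝓝[>] (0:ℝ), s < Fu (v * z) / Fu z :=
    (hreg v hv0).eventually (eventually_gt_nhds hlt)
  have hq := qaux_tendsto hFumono hFurange hFupos hFu0 hξ hreg
  have hF1 : 0 < Fu 1 := hFupos 1 one_pos
  filter_upwards [hq.eventually hev1,
    Ioo_mem_nhdsGT_of_mem (Set.mem_Ico.mpr ⟨le_refl (0:ℝ), hF1⟩)] with τ hrat hτ
  obtain ⟨hτpos, hτlt⟩ := hτ
  have hqpos : 0 < qaux Fu τ := qaux_pos hFumono hFurange hFupos hξ hreg hτpos hτlt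
  have hFq : 0 < Fu (qaux Fu τ) := hFupos _ hqpos
  have hFge : τ ≤ Fu (qaux Fu τ) := Fu_qaux_ge hFurc hFu0 hτpos hτlt
  have hkey : s * τ < Fu (v * qaux Fu τ) := by
    have h3 : s * Fu (qaux Fu τ) < Fu (v * qaux Fu τ) := by
      have := (lt_div_iff₀ hFq).mp hrat
      linarith [this]
    nlinarith
  exact qaux_le hFu0 (mul_pos hs hτpos) hkey

lemma ratio_lower {Fu : ℝ → ℝ} (hFumono : Monotone Fu) (hFurange : ∀ z : ℝ, Fu z ≤ 1)
    (hFupos : ∀ z > (0:ℝ), 0 < Fu z) (hFu0 : ∀ z < (0:ℝ), Fu z = 0)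
    {ξ : ℝ} (hξ : ξ < 0)
    (hreg : ∀ v > (0:ℝ), Tendsto (fun z => Fu (v * z) / Fu z) (𝓝[>] (0:ℝ)) (𝓝 (v ^ (-1/ξ))))
    {s v : ℝ} (hs : 0 < s) (hv0 : 0 < v) (hv : v < s ^ (-ξ)) :
    ∀ᶠ τ in 𝓝[>] (0:ℝ), v * qaux Fu τ ≤ qaux Fu (s * τ) := by
  have hexp : 0 < -1/ξ := by rw [div_pos_iff]; right; constructor <;> linarith
  have hlt : v ^ (-1/ξ) < s := by
    have h1 : v ^ (-1/ξ) < (s ^ (-ξ)) ^ (-1/ξ) := Real.rpow_lt_rpow hv0.le hv hexp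
    have h2 : (s ^ (-ξ)) ^ (-1/ξ) = s := by
      rw [← Real.rpow_mul hs.le]
      have : (-ξ) * (-1/ξ) = 1 := by field_simp [div_self hξ.ne]; exact div_self hξ.ne
      rw [this, Real.rpow_one]
    rwa [h2] at h1
  have hev : ∀ᶠ z in 𝓝[>] (0:ℝ), Fu (v * z) / Fu z < s :=
    (hreg v hv0).eventually (eventually_lt_nhds hlt)
  rw [eventually_nhdsWithin_iff, Metric.eventually_nhds_iff] at hev
  obtain ⟨z₃, hz₃pos, h3⟩ := hev
  set m : ℝ := min 1 (z₃ / 2) with hm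
  have hmpos : 0 < m := by positivity
  have hFm : 0 < Fu m := hFupos m hmpos
  have hF1 : 0 < Fu 1 := hFupos 1 one_pos
  have hev2 : ∀ᶠ τ in 𝓝[>] (0:ℝ), τ ∈ Set.Ioo 0 (min (Fu m) (Fu 1 / s)) :=
    Ioo_mem_nhdsGT_of_mem (Set.mem_Ico.mpr ⟨le_refl (0:ℝ), by positivity⟩)
  filter_upwards [hev2] with τ hτ
  obtain ⟨hτpos, hτlt⟩ := hτ
  have hτm : τ < Fu m := hτlt.trans_le (min_le_left _ _)
  have hτs : s * τ < Fu 1 := by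
    have := hτlt.trans_le (min_le_right _ _)
    rw [lt_div_iff₀ hs] at this
    linarith [this]
  have hqle : qaux Fu τ ≤ m := qaux_le hFu0 hτpos hτm
  have hqpos : 0 < qaux Fu τ := qaux_pos hFumono hFurange hFupos hξ hreg hτpos hτm
  refine le_qaux' (w := 1) hτs fun z hz => ?_
  by_contra h
  push_neg at h
  set w : ℝ := max (z / v) (qaux Fu τ / 2) with hw
  have hwpos : 0 < w := lt_max_of_lt_right (by positivity)
  have hwlt : w < qaux Fu τ := by
    apply max_lt
    · rw [div_lt_iff₀ hv0]; linarith [h]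
    · linarith
  have hwz₃ : w < z₃ := by
    have : m ≤ z₃ / 2 := min_le_right _ _
    linarith
  have hFw : 0 < Fu w := hFupos w hwpos
  have hFwτ : Fu w ≤ τ := Fu_le_of_lt_qaux hFu0 hτpos hwlt
  have h4 : Fu (v * w) / Fu w < s :=
    h3 (by rw [Real.dist_eq, sub_zero, abs_of_pos hwpos]; exact hwz₃) (Set.mem_Ioi.mpr hwpos)
  have h5 : Fu (v * w) < s * Fu w := by
    rw [div_lt_iff₀ hFw] at h4; linarith [h4]
  have h6 : z ≤ v * w := by
    have : z / v ≤ w := le_max_left _ _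
    rw [div_le_iff₀ hv0] at this
    linarith [this]
  have h7 : Fu z ≤ Fu (v * w) := hFumono h6
  have : Fu z < s * τ := by nlinarith
  have hzS : s * τ < Fu z := hz
  linarith

noncomputable def dotL {d : ℕ} (u : Fin d → ℝ) : (Fin d → ℝ) →ₗ[ℝ] ℝ where
  toFun w := ∑ i, u i * w i
  map_add' a b := by
    simp only [Pi.add_apply, mul_add]
    rw [Finset.sum_add_distrib]
  map_smul' c a := by
    simp only [Pi.smul_apply, smul_eq_mul, RingHom.id_apply, Finset.mul_sum]
    exact Finset.sum_congr rfl fun i _ => by ring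

theorem qr_limit
    (d : ℕ)
    (Xs : Set (Fin d → ℝ))
    (η : ℝ) (hη : η ∈ Set.Ioc (0:ℝ) 1)
    (F : (Fin d → ℝ) → ℝ → ℝ)
    (hFmono : ∀ x ∈ Xs, Monotone (F x))
    (Fu : ℝ → ℝ)
    (hFumono : Monotone Fu)
    (hFurc : ∀ z : ℝ, ContinuousWithinAt Fu (Set.Ici z) z)
    (hFur1 : ∀ z : ℝ, Fu z ≤ 1)
    (K : (Fin d → ℝ) → ℝ)
    (hKpos : ∀ x ∈ Xs, 0 < K x)
    (ξ : ℝ) (hξ : ξ < 0)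
    (hFu0 : ∀ z < (0:ℝ), Fu z = 0)
    (hFupos : ∀ z > (0:ℝ), 0 < Fu z)
    (hreg : ∀ v > (0:ℝ), Tendsto (fun z => Fu (v * z) / Fu z) (𝓝[>] (0:ℝ)) (𝓝 (v ^ (-1/ξ))))
    (htaileq : TendstoUniformlyOn (fun z x => F x z / Fu z) K (𝓝[>] (0:ℝ)) Xs) :
    ∀ x ∈ Xs, Tendsto (fun τ => sInf {z | τ < F x z} / qaux Fu τ)
      (𝓝[>] (0:ℝ)) (𝓝 (K x ^ ξ)) := by
  classical
  have hF1 : 0 < Fu 1 := hFupos 1 one_pos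
  have hQbound : ∀ x ∈ Xs, ∀ ε₁ : ℝ, 0 < ε₁ → ε₁ < K x →
      ∀ᶠ τ in 𝓝[>] (0:ℝ),
        qaux Fu ((K x + ε₁)⁻¹ * τ) ≤ sInf {z | τ < F x z} ∧
        sInf {z | τ < F x z} ≤ qaux Fu ((K x - ε₁)⁻¹ * τ) := by
    intro x hx ε₁ hε₁ hε₁K
    have hKx : 0 < K x := hKpos x hx
    have hunif : ∀ᶠ z in 𝓝[>] (0:ℝ), ∀ y ∈ Xs, dist (K y) (F y z / Fu z) < ε₁ :=
      Metric.tendstoUniformlyOn_iff.mp htaileq ε₁ hε₁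
    rw [eventually_nhdsWithin_iff, Metric.eventually_nhds_iff] at hunif
    obtain ⟨z₁, hz₁pos, h1⟩ := hunif
    have hband : ∀ z : ℝ, 0 < z → z < z₁ →
        (K x - ε₁) * Fu z < F x z ∧ F x z < (K x + ε₁) * Fu z := by
      intro z hz hzlt
      have hFz : 0 < Fu z := hFupos z hz
      have hd := h1 (by rw [Real.dist_eq, sub_zero, abs_of_pos hz]; exact hzlt)
        (Set.mem_Ioi.mpr hz) x hx
      rw [Real.dist_eq, abs_lt] at hd
      obtain ⟨hd1, hd2⟩ := hd
      constructor
      · have h3 : K x - ε₁ < F x z / Fu z := by linarith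
        calc (K x - ε₁) * Fu z < (F x z / Fu z) * Fu z := mul_lt_mul_of_pos_right h3 hFz
        _ = F x z := by field_simp
      · have h3 : F x z / Fu z < K x + ε₁ := by linarith
        calc F x z = (F x z / Fu z) * Fu z := by field_simp
        _ < (K x + ε₁) * Fu z := mul_lt_mul_of_pos_right h3 hFz
    have hFneg : ∀ z : ℝ, z ≤ 0 → F x z ≤ 0 := by
      intro z hz
      by_contra hpos
      push_neg at hpos
      obtain ⟨δ, hδpos, hδ⟩ := Fu_small hFumono hFur1 hFupos hξ hreg
        (ε := F x z / (K x + ε₁)) (by positivity)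
      set w := min δ (z₁/2) with hw
      have hwpos : 0 < w := lt_min hδpos (by positivity)
      have hw1 : w < z₁ := (min_le_right _ _).trans_lt (by linarith)
      have hFw := (hband w hwpos hw1).2
      have hFuw : Fu w ≤ F x z / (K x + ε₁) := hδ w (min_le_left _ _)
      have hmono : F x z ≤ F x w := hFmono x hx (le_trans hz hwpos.le)
      have hcancel : (K x + ε₁) * (F x z / (K x + ε₁)) = F x z := by field_simp
      have : F x z < F x z := by
        calc F x z ≤ F x w := hmono
        _ < (K x + ε₁) * Fu w := hFw
        _ ≤ (K x + ε₁) * (F x z / (K x + ε₁)) :=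
            mul_le_mul_of_nonneg_left hFuw (by positivity)
        _ = F x z := hcancel
      exact lt_irrefl _ this
    set s₁ := (K x - ε₁)⁻¹ with hs₁
    set s₂ := (K x + ε₁)⁻¹ with hs₂
    have hs₁pos : 0 < s₁ := inv_pos.mpr (by linarith)
    have hs₂pos : 0 < s₂ := inv_pos.mpr (by linarith)
    set m := min 1 (z₁/2) with hm
    have hmpos : 0 < m := lt_min one_pos (by positivity)
    have hFm : 0 < Fu m := hFupos m hmpos
    have hmz₁ : m < z₁ := (min_le_right _ _).trans_lt (by linarith)
    filter_upwards [Ioo_mem_nhdsGT_of_mem (Set.mem_Ico.mpr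
      ⟨le_refl (0:ℝ), show (0:ℝ) < min (Fu m / s₁) (Fu m / s₂) from
        lt_min (by positivity) (by positivity)⟩)] with τ hτ
    obtain ⟨hτpos, hτlt⟩ := hτ
    have hτ1 : s₁ * τ < Fu m := by
      have h := hτlt.trans_le (min_le_left _ _)
      rw [lt_div_iff₀ hs₁pos] at h
      linarith
    have hτ2 : s₂ * τ < Fu m := by
      have h := hτlt.trans_le (min_le_right _ _)
      rw [lt_div_iff₀ hs₂pos] at h
      linarith
    have hs₁τpos : 0 < s₁ * τ := mul_pos hs₁pos hτpos
    have hs₂τpos : 0 < s₂ * τ := mul_pos hs₂pos hτpos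
    set w := qaux Fu (s₁ * τ) with hwdef
    have hwm : w ≤ m := qaux_le hFu0 hs₁τpos hτ1
    have hwpos : 0 < w := qaux_pos hFumono hFur1 hFupos hξ hreg hs₁τpos hτ1
    have hwz₁ : w < z₁ := hwm.trans_lt hmz₁
    have hexel : ∀ δ' : ℝ, 0 < δ' → δ' ≤ (z₁ - w)/2 →
        ∃ z', τ < F x z' ∧ w ≤ z' ∧ z' < w + δ' := by
      intro δ' hδ'pos hδ'le
      obtain ⟨z', hz'S, hz'lt⟩ := exists_lt_of_csInf_lt (s := {z | s₁ * τ < Fu z}) ⟨m, hτ1⟩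
        (lt_add_of_pos_right w hδ'pos)
      have hz'ge : w ≤ z' := csInf_le (Saux_bdd hFu0 hs₁τpos) hz'S
      have hz'pos : 0 < z' := hwpos.trans_le hz'ge
      have hz'z₁ : z' < z₁ := by
        have : z' < w + δ' := hz'lt
        linarith
      have hFb := (hband z' hz'pos hz'z₁).1
      have hτF : τ < F x z' := by
        have hK1 : (K x - ε₁) * (s₁ * τ) = τ := by
          rw [hs₁, ← mul_assoc, mul_inv_cancel₀ (by linarith : K x - ε₁ ≠ 0), one_mul]
        have h5 : (K x - ε₁) * (s₁ * τ) < (K x - ε₁) * Fu z' :=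
          mul_lt_mul_of_pos_left hz'S (by linarith)
        rw [hK1] at h5
        linarith
      exact ⟨z', hτF, hz'ge, hz'lt⟩
    have hne : {z | τ < F x z}.Nonempty := by
      obtain ⟨z', h, _, _⟩ := hexel ((z₁ - w)/2) (by linarith) le_rfl
      exact ⟨z', h⟩
    have hbddF : BddBelow {z | τ < F x z} := by
      refine ⟨0, fun y hy => ?_⟩
      by_contra hc
      push_neg at hc
      have := hFneg y hc.le
      have hy' : τ < F x y := hy
      linarith
    constructor
    · refine le_csInf hne fun z hz => ?_
      have hz' : τ < F x z := hz
      have hzpos : 0 < z := by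
        by_contra hc
        push_neg at hc
        have := hFneg z hc
        linarith
      rcases lt_or_ge z z₁ with hzz | hzz
      · have hFb := (hband z hzpos hzz).2
        have h6 : τ < (K x + ε₁) * Fu z := lt_trans hz' hFb
        have h7 : s₂ * τ < Fu z := by
          rw [hs₂, inv_mul_lt_iff₀ (by linarith : (0:ℝ) < K x + ε₁)]
          exact h6
        exact qaux_le hFu0 hs₂τpos h7
      · have hw₂m : qaux Fu (s₂ * τ) ≤ m := qaux_le hFu0 hs₂τpos hτ2
        have hmz : m ≤ z₁/2 := min_le_right _ _
        linarith
    · by_contra hcon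
      push_neg at hcon
      set Q := sInf {z | τ < F x z} with hQ
      set δ' := min ((Q - w)/2) ((z₁ - w)/2) with hδ'
      have hδ'pos : 0 < δ' := lt_min (by linarith) (by linarith)
      obtain ⟨z', hz'S, hz'ge, hz'lt⟩ := hexel δ' hδ'pos (min_le_right _ _)
      have hQle : Q ≤ z' := csInf_le hbddF hz'S
      have hd1 : δ' ≤ (Q - w)/2 := min_le_left _ _
      linarith
  intro x hx
  have hKx : 0 < K x := hKpos x hx
  rw [Metric.tendsto_nhds]
  intro ε hε
  have hcont : ContinuousAt (fun t : ℝ => t ^ ξ) (K x) :=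
    Real.continuousAt_rpow_const _ _ (Or.inl hKx.ne')
  rw [Metric.continuousAt_iff] at hcont
  obtain ⟨δ, hδpos, hδ⟩ := hcont (ε/2) (half_pos hε)
  set ε₁ := min (δ/2) (K x / 2) with hε₁def
  have hε₁pos : 0 < ε₁ := lt_min (by positivity) (by positivity)
  have hε₁K : ε₁ < K x := (min_le_right _ _).trans_lt (by linarith)
  have hε₁δ : ε₁ < δ := (min_le_left _ _).trans_lt (by linarith)
  have hA : |(K x - ε₁) ^ ξ - K x ^ ξ| < ε/2 := by
    have := hδ (x := K x - ε₁) (by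
      rw [Real.dist_eq]
      have : K x - ε₁ - K x = -ε₁ := by ring
      rw [this, abs_neg, abs_of_pos hε₁pos]
      exact hε₁δ)
    rwa [Real.dist_eq] at this
  have hB : |(K x + ε₁) ^ ξ - K x ^ ξ| < ε/2 := by
    have := hδ (x := K x + ε₁) (by
      rw [Real.dist_eq]
      have : K x + ε₁ - K x = ε₁ := by ring
      rw [this, abs_of_pos hε₁pos]
      exact hε₁δ)
    rwa [Real.dist_eq] at this
  have hKe₁pos : (0:ℝ) < K x - ε₁ := by linarith
  have hKe₂pos : (0:ℝ) < K x + ε₁ := by linarith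
  have hAval : ((K x - ε₁)⁻¹ : ℝ) ^ (-ξ) = (K x - ε₁) ^ ξ := by
    rw [Real.inv_rpow hKe₁pos.le, Real.rpow_neg hKe₁pos.le, inv_inv]
  have hBval : ((K x + ε₁)⁻¹ : ℝ) ^ (-ξ) = (K x + ε₁) ^ ξ := by
    rw [Real.inv_rpow hKe₂pos.le, Real.rpow_neg hKe₂pos.le, inv_inv]
  have hBpos : (0:ℝ) < (K x + ε₁) ^ ξ := Real.rpow_pos_of_pos hKe₂pos _
  have hup := ratio_upper (Fu := Fu) hFumono hFur1 hFupos hFu0 hFurc hξ hreg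
    (s := (K x - ε₁)⁻¹) (v := (K x - ε₁) ^ ξ + ε/2) (inv_pos.mpr hKe₁pos)
    (by rw [hAval]; linarith)
  have hlow := ratio_lower (Fu := Fu) hFumono hFur1 hFupos hFu0 hξ hreg
    (s := (K x + ε₁)⁻¹) (v := max ((K x + ε₁) ^ ξ - ε/2) ((K x + ε₁) ^ ξ / 2))
    (inv_pos.mpr hKe₂pos)
    (lt_max_of_lt_right (by positivity))
    (by rw [hBval]; exact max_lt (by linarith) (by linarith))
  filter_upwards [hup, hlow, hQbound x hx ε₁ hε₁pos hε₁K,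
    Ioo_mem_nhdsGT_of_mem (Set.mem_Ico.mpr ⟨le_refl (0:ℝ), hF1⟩)] with τ h1 h2 h3 h4
  obtain ⟨hτpos, hτF1⟩ := h4
  have hqpos : 0 < qaux Fu τ := qaux_pos hFumono hFur1 hFupos hξ hreg hτpos hτF1
  obtain ⟨hlo, hhi⟩ := h3
  have hub : sInf {z | τ < F x z} ≤ ((K x - ε₁) ^ ξ + ε/2) * qaux Fu τ := le_trans hhi h1
  have hlb : (max ((K x + ε₁) ^ ξ - ε/2) ((K x + ε₁) ^ ξ / 2)) * qaux Fu τ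
      ≤ sInf {z | τ < F x z} := le_trans h2 hlo
  rw [Real.dist_eq, abs_lt]
  rw [abs_lt] at hA hB
  have hdivub : sInf {z | τ < F x z} / qaux Fu τ ≤ (K x - ε₁) ^ ξ + ε/2 :=
    (div_le_iff₀ hqpos).mpr hub
  have hdivlb : max ((K x + ε₁) ^ ξ - ε/2) ((K x + ε₁) ^ ξ / 2)
      ≤ sInf {z | τ < F x z} / qaux Fu τ := (le_div_iff₀ hqpos).mpr hlb
  have hmax : (K x + ε₁) ^ ξ - ε/2 ≤ max ((K x + ε₁) ^ ξ - ε/2) ((K x + ε₁) ^ ξ / 2) :=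
    le_max_left _ _
  constructor
  · linarith
  · linarith

lemma null_compl_supp {d : ℕ} (μ : Measure (Fin d → ℝ)) [IsProbabilityMeasure μ]
    (Xs : Set (Fin d → ℝ)) (hXssupp : ∀ x, x ∈ Xs ↔ ∀ U ∈ 𝓝 x, 0 < μ U) :
    μ Xsᶜ = 0 := by
  classical
  set B := {V ∈ TopologicalSpace.countableBasis (Fin d → ℝ) | μ V = 0} with hB
  have hcount : B.Countable :=
    (TopologicalSpace.countable_countableBasis _).mono (Set.sep_subset _ _)
  have hcover : Xsᶜ ⊆ ⋃₀ B := by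
    intro x hx
    rw [Set.mem_compl_iff, hXssupp] at hx
    push_neg at hx
    obtain ⟨U, hU, hUz⟩ := hx
    have hUz' : μ U = 0 := le_antisymm hUz zero_le
    obtain ⟨O, hOU, hOopen, hxO⟩ := mem_nhds_iff.mp hU
    obtain ⟨V, hVB, hxV, hVO⟩ :=
      (TopologicalSpace.isBasis_countableBasis _).exists_subset_of_mem_open hxO hOopen
    refine ⟨V, ⟨hVB, le_antisymm ?_ zero_le⟩, hxV⟩
    exact le_trans (measure_mono (hVO.trans hOU)) hUz'.le
  refine measure_mono_null hcover ?_
  rw [Set.sUnion_eq_biUnion]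
  rw [measure_biUnion_null_iff hcount]
  exact fun s hs => hs.2

lemma span_top_of_posdef {d : ℕ} (μ : Measure (Fin d → ℝ)) [IsProbabilityMeasure μ]
    (Xs : Set (Fin d → ℝ)) (hXssupp : ∀ x, x ∈ Xs ↔ ∀ U ∈ 𝓝 x, 0 < μ U)
    (hXscpt : IsCompact Xs)
    (hposdef : (Matrix.of fun i j : Fin d => ∫ x, x i * x j ∂μ).PosDef) :
    Submodule.span ℝ Xs = ⊤ := by
  classical
  have hnull : μ Xsᶜ = 0 := null_compl_supp μ Xs hXssupp
  have hae : ∀ᵐ x ∂μ, x ∈ Xs := by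
    rw [MeasureTheory.ae_iff]
    exact hnull
  -- boundedness
  obtain ⟨R, hR⟩ : ∃ R : ℝ, ∀ x ∈ Xs, ‖x‖ ≤ R := by
    obtain ⟨R, hR⟩ := hXscpt.isBounded.subset_closedBall 0
    exact ⟨R, fun x hx => by simpa using hR hx⟩
  have hint : ∀ i j : Fin d, Integrable (fun x : Fin d → ℝ => x i * x j) μ := by
    intro i j
    refine Integrable.mono' (integrable_const (R * R)) ?_ ?_
    · exact ((continuous_apply i).mul (continuous_apply j)).aestronglyMeasurable
    · filter_upwards [hae] with x hx
      have h1 : |x i| ≤ R := by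
        have := norm_le_pi_norm x i
        rw [Real.norm_eq_abs] at this
        exact this.trans (hR x hx)
      have h2 : |x j| ≤ R := by
        have := norm_le_pi_norm x j
        rw [Real.norm_eq_abs] at this
        exact this.trans (hR x hx)
      have : ‖x i * x j‖ = |x i| * |x j| := by rw [norm_mul]; rfl
      rw [this]
      have h0 : (0:ℝ) ≤ |x i| := abs_nonneg _
      nlinarith [abs_nonneg (x j)]
  -- key: vanishing linear functional
  have hkey : ∀ v : Fin d → ℝ, (∀ x ∈ Xs, ∑ i, x i * v i = 0) → v = 0 := by
    intro v hv
    by_contra hv0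
    have hpd := (Matrix.posDef_iff_dotProduct_mulVec.mp hposdef).2 hv0
    have hg : ∀ᵐ x ∂μ, (∑ i, x i * v i) = 0 := by
      filter_upwards [hae] with x hx using hv x hx
    have hsum : dotProduct (star v)
        ((Matrix.of fun i j : Fin d => ∫ x, x i * x j ∂μ).mulVec v)
        = ∫ x, (∑ i, x i * v i) * (∑ j, x j * v j) ∂μ := by
      have hswap : (fun x : Fin d → ℝ => (∑ i, x i * v i) * (∑ j, x j * v j))
          = fun x : Fin d → ℝ => ∑ i, ∑ j, v i * (x i * x j) * v j := by
        funext x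
        rw [Finset.sum_mul_sum]
        refine Finset.sum_congr rfl fun i _ => Finset.sum_congr rfl fun j _ => by ring
      rw [hswap, MeasureTheory.integral_finset_sum]
      · have : ∀ i : Fin d, (∫ x, ∑ j, v i * (x i * x j) * v j ∂μ)
            = ∑ j, v i * (∫ x, x i * x j ∂μ) * v j := by
          intro i
          rw [MeasureTheory.integral_finset_sum]
          · refine Finset.sum_congr rfl fun j _ => ?_
            rw [MeasureTheory.integral_mul_const, MeasureTheory.integral_const_mul]
          · intro j _
            exact ((hint i j).const_mul _).mul_const _
        simp only [this, dotProduct, Matrix.mulVec, Matrix.of_apply, star_trivial]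
        refine Finset.sum_congr rfl fun i _ => ?_
        rw [Finset.mul_sum]
        refine Finset.sum_congr rfl fun j _ => by ring
      · intro i _
        refine MeasureTheory.integrable_finset_sum _ fun j _ => ?_
        exact ((hint i j).const_mul _).mul_const _
    have hzero : (∫ x, (∑ i, x i * v i) * (∑ j, x j * v j) ∂μ) = 0 := by
      have : (fun x : Fin d → ℝ => (∑ i, x i * v i) * (∑ j, x j * v j))
          =ᵐ[μ] (fun _ => (0:ℝ)) := by
        filter_upwards [hg] with x hx
        rw [hx, zero_mul]
      rw [MeasureTheory.integral_congr_ae this, MeasureTheory.integral_zero]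
    rw [hsum, hzero] at hpd
    exact lt_irrefl _ hpd
  -- conclude span = top
  by_contra hne
  obtain ⟨f, hf0, hfbot⟩ := Submodule.exists_dual_map_eq_bot_of_lt_top
    (lt_top_iff_ne_top.mpr hne) inferInstance
  set v : Fin d → ℝ := fun i => f (fun j => if i = j then 1 else 0) with hvdef
  have hfx : ∀ x : Fin d → ℝ, f x = ∑ i, x i * v i := by
    intro x
    rw [LinearMap.pi_apply_eq_sum_univ f x]
    exact Finset.sum_congr rfl fun i _ => rfl
  have hvz : v = 0 := by
    refine hkey v fun x hx => ?_
    rw [← hfx]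
    have hxspan : x ∈ Submodule.span ℝ Xs := Submodule.subset_span hx
    have := hfbot ▸ Submodule.mem_map_of_mem (f := f) hxspan
    simpa using this
  refine hf0 (LinearMap.ext fun x => ?_)
  rw [hfx x, hvz]
  simp

theorem extremal_qr_thm31_type3
    (d : ℕ) (hd : 1 ≤ d)
    (μ : Measure (Fin d → ℝ)) [IsProbabilityMeasure μ]
    (Xs : Set (Fin d → ℝ))
    (hXssupp : ∀ x, x ∈ Xs ↔ ∀ U ∈ 𝓝 x, 0 < μ U)
    (hXscpt : IsCompact Xs)
    (hposdef : (Matrix.of fun i j : Fin d => ∫ x, x i * x j ∂μ).PosDef)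
    (hmean : ∀ i : Fin d, (∫ x, x i ∂μ) = if (i : ℕ) = 0 then (1:ℝ) else 0)
    (η : ℝ) (hη : η ∈ Set.Ioc (0:ℝ) 1)
    (γ : ℝ → Fin d → ℝ)
    (F : (Fin d → ℝ) → ℝ → ℝ)
    (hFmono : ∀ x ∈ Xs, Monotone (F x))
    (hFrc : ∀ x ∈ Xs, ∀ z : ℝ, ContinuousWithinAt (F x) (Set.Ici z) z)
    (hFrange : ∀ x ∈ Xs, ∀ z : ℝ, F x z ∈ Set.Icc (0:ℝ) 1)
    (hlin : ∀ τ ∈ Set.Ioc (0:ℝ) η, ∀ x ∈ Xs, sInf {z | τ < F x z} = ∑ i, x i * γ τ i)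
    (Fu : ℝ → ℝ)
    (hFumono : Monotone Fu)
    (hFurc : ∀ z : ℝ, ContinuousWithinAt Fu (Set.Ici z) z)
    (hFurange : ∀ z : ℝ, Fu z ∈ Set.Icc (0:ℝ) 1)
    (hFuinv : ∀ τ ∈ Set.Ioc (0:ℝ) η, sInf {z | τ < Fu z} = ∑ i, (∫ x, x i ∂μ) * γ τ i)
    (K : (Fin d → ℝ) → ℝ)
    (hKcont : ContinuousOn K Xs)
    (hKbdd : BddAbove (K '' Xs))
    (hKpos : ∀ x ∈ Xs, 0 < K x)
    (ξ : ℝ) (hξ : ξ < 0)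
    (hFu0 : ∀ z < (0:ℝ), Fu z = 0)
    (hFupos : ∀ z > (0:ℝ), 0 < Fu z)
    (hreg : ∀ v > (0:ℝ), Tendsto (fun z => Fu (v * z) / Fu z) (𝓝[>] (0:ℝ)) (𝓝 (v ^ (-1/ξ))))
    (htaileq : TendstoUniformlyOn (fun z x => F x z / Fu z) K (𝓝[>] (0:ℝ)) Xs)
    :
    ∃ c : Fin d → ℝ, (∑ i, (∫ x, x i ∂μ) * c i) = 1 ∧
      (∀ x ∈ Xs, 0 < (∑ i, x i * c i) ∧ K x = (∑ i, x i * c i) ^ (1/ξ)) := by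
  classical
  have hFur1 : ∀ z : ℝ, Fu z ≤ 1 := fun z => (hFurange z).2
  have hF1 : 0 < Fu 1 := hFupos 1 one_pos
  have hlim := qr_limit d Xs η hη F hFmono Fu hFumono hFurc hFur1 K hKpos ξ hξ
    hFu0 hFupos hreg htaileq
  have hspan : Submodule.span ℝ Xs = ⊤ := span_top_of_posdef μ Xs hXssupp hXscpt hposdef
  obtain ⟨t, htsub, htsp, htli⟩ := exists_linearIndependent ℝ Xs
  have htsp' : Submodule.span ℝ t = ⊤ := by rw [htsp, hspan]
  let b : Module.Basis t ℝ (Fin d → ℝ) :=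
    Module.Basis.mk htli (by rw [Subtype.range_coe]; exact htsp'.ge)
  haveI : Fintype t := FiniteDimensional.fintypeBasisIndex b
  have hcard : Fintype.card t = d := by
    have h1 := Module.finrank_eq_card_basis b
    rw [Module.finrank_fin_fun] at h1
    exact h1.symm
  set L : (Fin d → ℝ) →ₗ[ℝ] (t → ℝ) :=
    LinearMap.pi (fun u : t => dotL (u : Fin d → ℝ)) with hL
  have hinj : Function.Injective L := by
    rw [← LinearMap.ker_eq_bot, Submodule.eq_bot_iff]
    intro w hw
    have hw' : ∀ u : t, ∑ i, (u : Fin d → ℝ) i * w i = 0 := by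
      intro u
      have := congrFun (LinearMap.mem_ker.mp hw) u
      simpa [hL, dotL] using this
    have hker : Submodule.span ℝ t ≤ LinearMap.ker (dotL w) := by
      rw [Submodule.span_le]
      intro y hy
      rw [SetLike.mem_coe, LinearMap.mem_ker]
      show ∑ i, w i * y i = 0
      rw [← hw' ⟨y, hy⟩]
      exact Finset.sum_congr rfl fun i _ => mul_comm _ _
    have hww : ∑ i, w i * w i = 0 := by
      have : w ∈ LinearMap.ker (dotL w) := by
        apply hker
        rw [htsp']
        trivial
      exact LinearMap.mem_ker.mp this
    funext i
    have hnn : ∀ i ∈ Finset.univ, (0:ℝ) ≤ w i * w i := fun i _ => mul_self_nonneg _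
    have := (Finset.sum_eq_zero_iff_of_nonneg hnn).mp hww i (Finset.mem_univ i)
    have := mul_self_eq_zero.mp this
    simpa using this
  have hdim : Module.finrank ℝ (Fin d → ℝ) = Module.finrank ℝ (t → ℝ) := by
    rw [Module.finrank_fin_fun, Module.finrank_pi, hcard]
  let e := L.linearEquivOfInjective hinj hdim
  set κ : t → ℝ := fun u => K u ^ ξ with hκ
  set c : Fin d → ℝ := e.symm κ with hc
  have hIocev : ∀ᶠ τ in 𝓝[>] (0:ℝ), τ ∈ Set.Ioc (0:ℝ) η ∧ τ < Fu 1 := by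
    filter_upwards [Ioo_mem_nhdsGT_of_mem (Set.mem_Ico.mpr
      ⟨le_refl (0:ℝ), lt_min hη.1 hF1⟩)] with τ hτ
    exact ⟨⟨hτ.1, (hτ.2.trans_le (min_le_left _ _)).le⟩, hτ.2.trans_le (min_le_right _ _)⟩
  have hγlim : Tendsto (fun τ => (fun i => γ τ i / qaux Fu τ)) (𝓝[>] (0:ℝ)) (𝓝 c) := by
    have hLh : Tendsto (fun τ => L (fun i => γ τ i / qaux Fu τ)) (𝓝[>] (0:ℝ)) (𝓝 κ) := by
      rw [tendsto_pi_nhds]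
      intro u
      have hcongr : ∀ᶠ τ in 𝓝[>] (0:ℝ),
          sInf {z | τ < F (u : Fin d → ℝ) z} / qaux Fu τ
          = (L (fun i => γ τ i / qaux Fu τ)) u := by
        filter_upwards [hIocev] with τ hτ
        have hlin' := hlin τ hτ.1 u (htsub u.2)
        show _ = ∑ i, (u : Fin d → ℝ) i * (γ τ i / qaux Fu τ)
        rw [hlin']
        rw [Finset.sum_div]
        exact Finset.sum_congr rfl fun i _ => (mul_div_assoc _ _ _)
      exact Tendsto.congr' hcongr (hlim u (htsub u.2))
    have hcontsymm : Continuous (e.symm : (t → ℝ) → (Fin d → ℝ)) :=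
      LinearMap.continuous_of_finiteDimensional _
    have hcomp := (hcontsymm.tendsto κ).comp hLh
    refine hcomp.congr fun τ => ?_
    show e.symm (L (fun i => γ τ i / qaux Fu τ)) = _
    have hLe : L (fun i => γ τ i / qaux Fu τ) = e (fun i => γ τ i / qaux Fu τ) :=
      (LinearMap.linearEquivOfInjective_apply hinj hdim _).symm
    rw [hLe, LinearEquiv.symm_apply_apply]
  have hdot : ∀ u : Fin d → ℝ,
      Tendsto (fun τ => ∑ i, u i * (γ τ i / qaux Fu τ)) (𝓝[>] (0:ℝ)) (𝓝 (∑ i, u i * c i)) := by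
    intro u
    have hcont : Continuous (dotL u : (Fin d → ℝ) → ℝ) :=
      LinearMap.continuous_of_finiteDimensional _
    exact (hcont.tendsto c).comp hγlim
  refine ⟨c, ?_, ?_⟩
  · have hone : ∀ᶠ τ in 𝓝[>] (0:ℝ),
        ∑ i, (∫ x, x i ∂μ) * (γ τ i / qaux Fu τ) = 1 := by
      filter_upwards [hIocev] with τ hτ
      have hqpos : 0 < qaux Fu τ :=
        qaux_pos hFumono hFur1 hFupos hξ hreg hτ.1.1 hτ.2
      have hiq : qaux Fu τ = ∑ i, (∫ x, x i ∂μ) * γ τ i := hFuinv τ hτ.1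
      calc ∑ i, (∫ x, x i ∂μ) * (γ τ i / qaux Fu τ)
          = (∑ i, (∫ x, x i ∂μ) * γ τ i) / qaux Fu τ := by
            rw [Finset.sum_div]
            exact Finset.sum_congr rfl fun i _ => (mul_div_assoc _ _ _).symm
      _ = qaux Fu τ / qaux Fu τ := by rw [← hiq]
      _ = 1 := div_self hqpos.ne'
    exact tendsto_nhds_unique (hdot _)
      (Tendsto.congr' (by filter_upwards [hone] with τ h; exact h.symm) tendsto_const_nhds)
  · intro x hxs
    have heq : ∀ᶠ τ in 𝓝[>] (0:ℝ),
        sInf {z | τ < F x z} / qaux Fu τ = ∑ i, x i * (γ τ i / qaux Fu τ) := by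
      filter_upwards [hIocev] with τ hτ
      rw [hlin τ hτ.1 x hxs, Finset.sum_div]
      exact Finset.sum_congr rfl fun i _ => (mul_div_assoc _ _ _)
    have hxc : ∑ i, x i * c i = K x ^ ξ :=
      tendsto_nhds_unique (hdot x) (Tendsto.congr' heq (hlim x hxs))
    have hKx : 0 < K x := hKpos x hxs
    constructor
    · rw [hxc]
      exact Real.rpow_pos_of_pos hKx _
    · rw [hxc, ← Real.rpow_mul hKx.le, mul_one_div, div_self hξ.ne, Real.rpow_one]
end

section
/- (Lemma 9.1(ii), type 3 tails) Under the linear quantile regression setup with type 3 tails of index ξ < 0, there exists a vector c ∈ ℝ^d with μ_Xᵀc = 1, xᵀc > 0 and K(x) = (xᵀc)^{1/ξ} for all x ∈ 𝐗, such that, setting a_T := 1/F_u⁻¹(1/T) for integers T with 1/T ∈ (0,η], for every compact set 𝒦 ⊂ (0,∞) one has sup_{k ∈ 𝒦} ‖a_T·γ(k/T) − k^{−ξ}·c‖ → 0 as the integer T → ∞ (for T large enough that k/T ∈ (0,η] for all k ∈ 𝒦). -/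
open MeasureTheory Filter Topology Real

set_option maxHeartbeats 1000000 in
theorem extremal_qr_lem91ii_type3
    (d : ℕ) (hd : 1 ≤ d)
    (μ : Measure (Fin d → ℝ)) [IsProbabilityMeasure μ]
    (Xs : Set (Fin d → ℝ))
    (hXssupp : ∀ x, x ∈ Xs ↔ ∀ U ∈ 𝓝 x, 0 < μ U)
    (hXscpt : IsCompact Xs)
    (hposdef : (Matrix.of fun i j : Fin d => ∫ x, x i * x j ∂μ).PosDef)
    (hmean : ∀ i : Fin d, (∫ x, x i ∂μ) = if (i : ℕ) = 0 then (1:ℝ) else 0)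
    (η : ℝ) (hη : η ∈ Set.Ioc (0:ℝ) 1)
    (γ : ℝ → Fin d → ℝ)
    (F : (Fin d → ℝ) → ℝ → ℝ)
    (hFmono : ∀ x ∈ Xs, Monotone (F x))
    (hFrc : ∀ x ∈ Xs, ∀ z : ℝ, ContinuousWithinAt (F x) (Set.Ici z) z)
    (hFrange : ∀ x ∈ Xs, ∀ z : ℝ, F x z ∈ Set.Icc (0:ℝ) 1)
    (hlin : ∀ τ ∈ Set.Ioc (0:ℝ) η, ∀ x ∈ Xs, sInf {z | τ < F x z} = ∑ i, x i * γ τ i)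
    (Fu : ℝ → ℝ)
    (hFumono : Monotone Fu)
    (hFurc : ∀ z : ℝ, ContinuousWithinAt Fu (Set.Ici z) z)
    (hFurange : ∀ z : ℝ, Fu z ∈ Set.Icc (0:ℝ) 1)
    (hFuinv : ∀ τ ∈ Set.Ioc (0:ℝ) η, sInf {z | τ < Fu z} = ∑ i, (∫ x, x i ∂μ) * γ τ i)
    (K : (Fin d → ℝ) → ℝ)
    (hKcont : ContinuousOn K Xs)
    (hKbdd : BddAbove (K '' Xs))
    (hKpos : ∀ x ∈ Xs, 0 < K x)
    (ξ : ℝ) (hξ : ξ < 0)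
    (hFu0 : ∀ z < (0:ℝ), Fu z = 0)
    (hFupos : ∀ z > (0:ℝ), 0 < Fu z)
    (hreg : ∀ v > (0:ℝ), Tendsto (fun z => Fu (v * z) / Fu z) (𝓝[>] (0:ℝ)) (𝓝 (v ^ (-1/ξ))))
    (htaileq : TendstoUniformlyOn (fun z x => F x z / Fu z) K (𝓝[>] (0:ℝ)) Xs)
    :
    ∃ c : Fin d → ℝ, (∑ i, (∫ x, x i ∂μ) * c i) = 1 ∧
      (∀ x ∈ Xs, 0 < (∑ i, x i * c i) ∧ K x = (∑ i, x i * c i) ^ (1/ξ)) ∧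
      ∀ Ks : Set ℝ, IsCompact Ks → Ks ⊆ Set.Ioi 0 →
        ∀ ε > (0:ℝ), ∀ᶠ T : ℕ in atTop, ∀ k ∈ Ks,
          ‖(1 / sInf {z | (1:ℝ) / (T:ℝ) < Fu z}) • γ (k / (T:ℝ)) - (k ^ (-ξ)) • c‖ < ε := by
  classical
  obtain ⟨hη0, hη1⟩ := hη
  have hξ0 : ξ ≠ 0 := ne_of_lt hξ
  have hexp : 0 < -1/ξ := div_pos_of_neg_of_neg (by norm_num) hξ
  have hnegxi : 0 < -ξ := neg_pos.2 hξ
  -- the key kernel-triviality fact from positive definiteness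
  have hker : ∀ w : Fin d → ℝ, (∀ x ∈ Xs, (∑ i, x i * w i) = 0) → w = 0 := by
    have hXsnull : μ Xsᶜ = 0 := by
      have hopen : ∀ x : (Fin d → ℝ), x ∈ Xsᶜ → ∃ V : Set (Fin d → ℝ),
          IsOpen V ∧ x ∈ V ∧ μ V = 0 := by
        intro x hx
        rw [Set.mem_compl_iff, hXssupp, not_forall] at hx
        obtain ⟨U, hU⟩ := hx
        rw [_root_.not_imp] at hU
        obtain ⟨hU1, hU2⟩ := hU
        obtain ⟨V, hVU, hVopen, hxV⟩ := mem_nhds_iff.1 hU1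
        exact ⟨V, hVopen, hxV, le_antisymm
          (not_lt.1 (fun h => hU2 (h.trans_le (measure_mono hVU)))) zero_le⟩
      choose! V hVopen hVmem hVnull using hopen
      obtain ⟨T, hTcnt, hTeq⟩ := TopologicalSpace.isOpen_iUnion_countable
        (fun x : ↥Xsᶜ => V x) (fun x => hVopen x x.2)
      have hsub : Xsᶜ ⊆ ⋃ x ∈ T, V (x : ↥Xsᶜ) := by
        rw [hTeq]
        intro x hx
        exact Set.mem_iUnion.2 ⟨⟨x, hx⟩, hVmem x hx⟩
      refine measure_mono_null hsub ?_
      exact (measure_biUnion_null_iff hTcnt).2 fun x _ => hVnull x x.2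
    have hae : ∀ᵐ x ∂μ, x ∈ Xs := by
      rw [ae_iff]
      exact hXsnull
    obtain ⟨R, hR⟩ := hXscpt.isBounded.exists_norm_le
    have hint : ∀ i j : Fin d, Integrable (fun x : Fin d → ℝ => x i * x j) μ := by
      intro i j
      refine ⟨(Continuous.mul (continuous_apply i) (continuous_apply j)).aestronglyMeasurable, ?_⟩
      refine HasFiniteIntegral.of_bounded (C := R * R) ?_
      filter_upwards [hae] with x hx
      have h1 : |x i| ≤ ‖x‖ := by simpa using norm_le_pi_norm x i
      have h2 : |x j| ≤ ‖x‖ := by simpa using norm_le_pi_norm x j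
      have h3 := hR x hx
      have h0 : (0:ℝ) ≤ ‖x‖ := norm_nonneg x
      calc ‖x i * x j‖ = |x i| * |x j| := by rw [norm_mul]; rfl
        _ ≤ ‖x‖ * ‖x‖ := mul_le_mul h1 h2 (abs_nonneg _) h0
        _ ≤ R * R := mul_le_mul h3 h3 h0 (h0.trans h3)
    intro w hw
    by_contra hw0
    have hpd := hposdef.dotProduct_mulVec_pos hw0
    have hcalc : dotProduct (star w)
        ((Matrix.of fun i j : Fin d => ∫ x, x i * x j ∂μ).mulVec w)
        = ∫ x, (∑ i, x i * w i) ^ 2 ∂μ := by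
      have h1 : dotProduct (star w)
          ((Matrix.of fun i j : Fin d => ∫ x, x i * x j ∂μ).mulVec w)
          = ∑ j, ∑ i, ∫ x, (w j * w i) * (x j * x i) ∂μ := by
        simp only [dotProduct, Matrix.mulVec, Matrix.of_apply, Pi.star_apply,
          star_trivial, dotProduct]
        refine Finset.sum_congr rfl fun j _ => ?_
        rw [Finset.mul_sum]
        refine Finset.sum_congr rfl fun i _ => ?_
        rw [integral_const_mul]
        ring
      rw [h1]
      have h2 : ∀ j i : Fin d, Integrable (fun x : Fin d → ℝ => (w j * w i) * (x j * x i)) μ :=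
        fun j i => (hint j i).const_mul _
      rw [show (∑ j, ∑ i, ∫ x, (w j * w i) * (x j * x i) ∂μ)
          = ∫ x, ∑ j : Fin d, ∑ i : Fin d, (w j * w i) * (x j * x i) ∂μ by
        rw [integral_finset_sum _ (fun j _ => integrable_finset_sum _ (fun i _ => h2 j i))]
        exact Finset.sum_congr rfl fun j _ => (integral_finset_sum _ (fun i _ => h2 j i)).symm]
      refine integral_congr_ae (Eventually.of_forall fun x => ?_)
      dsimp only
      rw [sq, Finset.sum_mul_sum]
      exact Finset.sum_congr rfl fun j _ => Finset.sum_congr rfl fun i _ => by ring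
    have hzero : ∫ x, (∑ i, x i * w i) ^ 2 ∂μ = 0 := by
      refine integral_eq_zero_of_ae ?_
      filter_upwards [hae] with x hx
      rw [hw x hx]; norm_num
    rw [hcalc, hzero] at hpd
    exact lt_irrefl 0 hpd
  have hmulIoi : ∀ c : ℝ, 0 < c → Tendsto (fun y : ℝ => c * y) (𝓝[>] (0:ℝ)) (𝓝[>] (0:ℝ)) := by
    intro c hc
    rw [tendsto_nhdsWithin_iff]
    constructor
    · have h : Tendsto (fun y : ℝ => c * y) (𝓝 0) (𝓝 (c * 0)) :=
        (continuous_const.mul continuous_id).tendsto 0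
      rw [mul_zero] at h
      exact h.mono_left nhdsWithin_le_nhds
    · filter_upwards [self_mem_nhdsWithin] with y hy
      exact mul_pos hc hy
  -- Fu vanishes at 0 and on nonpositives
  have hFu00 : Fu 0 = 0 := by
    by_contra h
    have ha : 0 < Fu 0 := lt_of_le_of_ne (hFurange 0).1 (Ne.symm h)
    have htd : Tendsto Fu (𝓝[>] (0:ℝ)) (𝓝 (Fu 0)) :=
      (hFurc 0).tendsto.mono_left (nhdsWithin_mono _ Set.Ioi_subset_Ici_self)
    have htd2 : Tendsto (fun z : ℝ => Fu (2 * z)) (𝓝[>] (0:ℝ)) (𝓝 (Fu 0)) :=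
      htd.comp (hmulIoi 2 two_pos)
    have hdiv : Tendsto (fun z : ℝ => Fu (2*z) / Fu z) (𝓝[>] (0:ℝ)) (𝓝 (Fu 0 / Fu 0)) :=
      htd2.div htd (ne_of_gt ha)
    rw [div_self (ne_of_gt ha)] at hdiv
    have heq := tendsto_nhds_unique (hreg 2 two_pos) hdiv
    have h2 : (1:ℝ) < (2:ℝ) ^ (-1/ξ) :=
      (Real.one_lt_rpow_iff_of_pos two_pos).2 (Or.inl ⟨one_lt_two, hexp⟩)
    rw [heq] at h2
    exact lt_irrefl _ h2
  have hFu0' : ∀ z ≤ (0:ℝ), Fu z = 0 := fun z hz => by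
    rcases lt_or_eq_of_le hz with h | h
    · exact hFu0 z h
    · rw [h]; exact hFu00
  have hFuto0 : Tendsto Fu (𝓝[>] (0:ℝ)) (𝓝 0) := by
    have h := (hFurc 0).tendsto
    rw [hFu00] at h
    exact h.mono_left (nhdsWithin_mono _ Set.Ioi_subset_Ici_self)
  -- the unconditional quantile function
  set q : ℝ → ℝ := fun τ => sInf {z | τ < Fu z} with hqdef
  have hSbdd : ∀ τ : ℝ, 0 < τ → BddBelow {z | τ < Fu z} := by
    intro τ hτ
    refine ⟨0, fun z hz => ?_⟩
    by_contra h
    push_neg at h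
    rw [Set.mem_setOf_eq, hFu0' z (le_of_lt h)] at hz
    linarith
  have hqle : ∀ τ : ℝ, 0 < τ → ∀ z : ℝ, τ < Fu z → q τ ≤ z :=
    fun τ hτ z hz => csInf_le (hSbdd τ hτ) hz
  have hqnonneg : ∀ τ : ℝ, 0 < τ → 0 ≤ q τ := by
    intro τ hτ
    refine Real.sInf_nonneg fun z hz => ?_
    by_contra h
    push_neg at h
    rw [Set.mem_setOf_eq, hFu0' z (le_of_lt h)] at hz
    linarith
  have hqlt : ∀ τ : ℝ, 0 < τ → ∀ z : ℝ, z < q τ → Fu z ≤ τ := by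
    intro τ hτ z hz
    by_contra h
    push_neg at h
    exact absurd (hqle τ hτ z h) (not_le.2 hz)
  have hqpos : ∀ τ : ℝ, 0 < τ → τ < Fu 1 → 0 < q τ := by
    intro τ hτ h1
    obtain ⟨δ, hδlt, hδpos⟩ := ((hFuto0.eventually_lt_const hτ).and self_mem_nhdsWithin).exists
    refine lt_of_lt_of_le hδpos (le_csInf ⟨1, h1⟩ fun z hz => ?_)
    by_contra h
    push_neg at h
    exact absurd hz (not_lt.2 ((hFumono h.le).trans hδlt.le))
  have hFuq : ∀ τ : ℝ, 0 < τ → τ < Fu 1 → τ ≤ Fu (q τ) := by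
    intro τ hτ h1
    have hup : ∀ z, q τ < z → τ < Fu z := by
      intro z hz
      obtain ⟨w, hw, hwz⟩ := exists_lt_of_csInf_lt (s := {z | τ < Fu z}) ⟨1, h1⟩ hz
      exact lt_of_lt_of_le hw (hFumono hwz.le)
    have htd : Tendsto Fu (𝓝[>] (q τ)) (𝓝 (Fu (q τ))) :=
      (hFurc (q τ)).tendsto.mono_left (nhdsWithin_mono _ Set.Ioi_subset_Ici_self)
    refine ge_of_tendsto htd ?_
    filter_upwards [self_mem_nhdsWithin] with z hz
    exact (hup z hz).le
  -- base eventual facts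
  have hbase : ∀ᶠ τ in 𝓝[>] (0:ℝ),
      0 < τ ∧ τ < Fu 1 ∧ 0 < q τ ∧ τ ≤ Fu (q τ) := by
    have h1 : ∀ᶠ τ in 𝓝[>] (0:ℝ), τ < Fu 1 := by
      have h : Tendsto (fun τ : ℝ => τ) (𝓝[>] (0:ℝ)) (𝓝 0) :=
        tendsto_id.mono_left nhdsWithin_le_nhds
      exact h.eventually_lt_const (hFupos 1 one_pos)
    filter_upwards [self_mem_nhdsWithin, h1] with τ hτ h1'
    exact ⟨hτ, h1', hqpos τ hτ h1', hFuq τ hτ h1'⟩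
  have hqto0 : Tendsto q (𝓝[>] (0:ℝ)) (𝓝[>] (0:ℝ)) := by
    rw [tendsto_nhdsWithin_iff]
    constructor
    · rw [tendsto_order]
      constructor
      · intro b hb
        filter_upwards [hbase] with τ h
        exact lt_of_lt_of_le hb h.2.2.1.le
      · intro b hb
        have hFub : 0 < Fu (b/2) := hFupos _ (by linarith)
        have h : ∀ᶠ τ in 𝓝[>] (0:ℝ), τ < Fu (b/2) :=
          (tendsto_id.mono_left nhdsWithin_le_nhds).eventually_lt_const hFub
        filter_upwards [h, self_mem_nhdsWithin] with τ h1 h2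
        exact lt_of_le_of_lt (hqle τ h2 _ h1) (by linarith)
    · filter_upwards [hbase] with τ h
      exact h.2.2.1
  -- tail bounds
  have htail : ∀ t : ℝ, 0 < t → ∀ᶠ z in 𝓝[>] (0:ℝ), ∀ x ∈ Xs,
      (K x - t) * Fu z ≤ F x z ∧ F x z ≤ (K x + t) * Fu z := by
    intro t ht
    filter_upwards [Metric.tendstoUniformlyOn_iff.1 htaileq t ht, self_mem_nhdsWithin]
      with z hz hz0 x hx
    have hFuz : 0 < Fu z := hFupos z hz0
    have hd2 := hz x hx
    rw [Real.dist_eq, abs_lt] at hd2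
    constructor
    · have h1 : K x - t < F x z / Fu z := by linarith [hd2.1]
      calc (K x - t) * Fu z ≤ (F x z / Fu z) * Fu z := by nlinarith
        _ = F x z := div_mul_cancel₀ _ (ne_of_gt hFuz)
    · have h1 : F x z / Fu z < K x + t := by linarith [hd2.2]
      calc F x z = (F x z / Fu z) * Fu z := (div_mul_cancel₀ _ (ne_of_gt hFuz)).symm
        _ ≤ (K x + t) * Fu z := by nlinarith
  have hFx0 : ∀ x ∈ Xs, ∀ z ≤ (0:ℝ), F x z = 0 := by
    intro x hx z hz
    refine le_antisymm ?_ (hFrange x hx z).1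
    have hb : ∀ᶠ w in 𝓝[>] (0:ℝ), F x z ≤ (K x + 1) * Fu w := by
      filter_upwards [htail 1 one_pos, self_mem_nhdsWithin] with w hw hw0
      exact le_trans (hFmono x hx (le_trans hz hw0.le)) (hw x hx).2
    have hlim : Tendsto (fun w => (K x + 1) * Fu w) (𝓝[>] (0:ℝ)) (𝓝 ((K x + 1) * 0)) :=
      hFuto0.const_mul _
    rw [mul_zero] at hlim
    exact ge_of_tendsto hlim hb
  -- conditional quantile
  set Q : (Fin d → ℝ) → ℝ → ℝ := fun x τ => sInf {z | τ < F x z} with hQdef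
  have hSxbdd : ∀ x ∈ Xs, ∀ τ : ℝ, 0 < τ → BddBelow {z | τ < F x z} := by
    intro x hx τ hτ
    refine ⟨0, fun z hz => ?_⟩
    by_contra h
    push_neg at h
    rw [Set.mem_setOf_eq, hFx0 x hx z (le_of_lt h)] at hz
    linarith
  have hQle : ∀ x ∈ Xs, ∀ τ : ℝ, 0 < τ → ∀ z : ℝ, τ < F x z → Q x τ ≤ z :=
    fun x hx τ hτ z hz => csInf_le (hSxbdd x hx τ hτ) hz
  have hQnonneg : ∀ x ∈ Xs, ∀ τ : ℝ, 0 < τ → 0 ≤ Q x τ := by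
    intro x hx τ hτ
    refine Real.sInf_nonneg fun z hz => ?_
    by_contra h
    push_neg at h
    rw [Set.mem_setOf_eq, hFx0 x hx z (le_of_lt h)] at hz
    linarith
  have hSxne : ∀ x ∈ Xs, ∃ β : ℝ, 0 < β ∧ ∀ τ : ℝ, 0 < τ → τ < β →
      {z | τ < F x z}.Nonempty := by
    intro x hx
    have hKx := hKpos x hx
    obtain ⟨δ, hδ, hδ0⟩ := ((htail (K x/2) (by positivity)).and self_mem_nhdsWithin).exists
    have hFuδ : 0 < Fu δ := hFupos δ hδ0
    refine ⟨(K x/2) * Fu δ, by positivity, fun τ hτ0 hτβ => ⟨δ, ?_⟩⟩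
    rw [Set.mem_setOf_eq]
    have h1 := (hδ x hx).1
    have h2 : (K x - K x/2) * Fu δ = K x/2 * Fu δ := by ring
    linarith
  -- THE KEY SANDWICH LEMMA
  have lemA : ∀ x ∈ Xs, ∀ s : ℝ, 0 < s → ∀ e : ℝ, 0 < e → ∀ᶠ τ in 𝓝[>] (0:ℝ),
      Q x (s*τ) ≤ (s^(-ξ) * K x ^ ξ + e) * q τ ∧
      (s^(-ξ) * K x ^ ξ - e) * q τ ≤ Q x (s*τ) := by
    intro x hx s hs e he
    have hKx : 0 < K x := hKpos x hx
    set φ : ℝ := s^(-ξ) * K x ^ ξ with hφdef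
    have hφpos : 0 < φ := mul_pos (Real.rpow_pos_of_pos hs _) (Real.rpow_pos_of_pos hKx _)
    have hφinv : φ ^ (-1/ξ) = s / K x := by
      rw [hφdef, Real.mul_rpow (Real.rpow_pos_of_pos hs _).le (Real.rpow_pos_of_pos hKx _).le,
        ← Real.rpow_mul hs.le, ← Real.rpow_mul hKx.le,
        show (-ξ) * (-1/ξ) = 1 by field_simp,
        show ξ * (-1/ξ) = -1 by field_simp,
        Real.rpow_one, Real.rpow_neg_one, div_eq_mul_inv]
    have hupper : ∀ᶠ τ in 𝓝[>] (0:ℝ), Q x (s*τ) ≤ (φ + e) * q τ := by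
      set v : ℝ := φ + e with hvdef
      have hv0 : 0 < v := by linarith
      have hv' : 0 < v^(-1/ξ) := Real.rpow_pos_of_pos hv0 _
      have hsv : s < K x * v^(-1/ξ) := by
        have h1 : φ^(-1/ξ) < v^(-1/ξ) := Real.rpow_lt_rpow hφpos.le (by linarith) hexp
        rw [hφinv] at h1
        calc s = K x * (s / K x) := by field_simp
          _ < K x * v^(-1/ξ) := mul_lt_mul_of_pos_left h1 hKx
      obtain ⟨t, hts, htK, htv, ht0⟩ : ∃ t : ℝ, s < (K x - t) * (v^(-1/ξ) - t) ∧
          t < K x ∧ t < v^(-1/ξ) ∧ 0 < t := by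
        have hc : Tendsto (fun t : ℝ => (K x - t) * (v^(-1/ξ) - t)) (𝓝[>] (0:ℝ))
            (𝓝 ((K x - 0) * (v^(-1/ξ) - 0))) := by
          apply Tendsto.mono_left ?_ nhdsWithin_le_nhds
          exact ((continuous_const.sub continuous_id).mul
            (continuous_const.sub continuous_id)).tendsto 0
        rw [sub_zero, sub_zero] at hc
        have e1 : ∀ᶠ t : ℝ in 𝓝[>] (0:ℝ), s < (K x - t)*(v^(-1/ξ)-t) :=
          hc.eventually_const_lt hsv
        have e2 : ∀ᶠ t : ℝ in 𝓝[>] (0:ℝ), t < K x :=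
          (tendsto_id.mono_left nhdsWithin_le_nhds).eventually_lt_const hKx
        have e3 : ∀ᶠ t : ℝ in 𝓝[>] (0:ℝ), t < v^(-1/ξ) :=
          (tendsto_id.mono_left nhdsWithin_le_nhds).eventually_lt_const hv'
        exact ((e1.and (e2.and (e3.and self_mem_nhdsWithin))).mono
          (fun t ⟨a, b, c, d'⟩ => ⟨a, b, c, d'⟩)).exists
      have hrat : Tendsto (fun τ => Fu (v * q τ) / Fu (q τ)) (𝓝[>] (0:ℝ)) (𝓝 (v^(-1/ξ))) :=
        (hreg v hv0).comp hqto0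
      have hratev : ∀ᶠ τ in 𝓝[>] (0:ℝ), v^(-1/ξ) - t < Fu (v * q τ) / Fu (q τ) :=
        hrat.eventually_const_lt (by linarith)
      have hzone : ∀ᶠ τ in 𝓝[>] (0:ℝ), ∀ y ∈ Xs,
          (K y - t) * Fu (v * q τ) ≤ F y (v * q τ) ∧ F y (v * q τ) ≤ (K y + t) * Fu (v * q τ) :=
        ((hmulIoi v hv0).comp hqto0).eventually (htail t ht0)
      filter_upwards [hbase, hratev, hzone] with τ hB hratτ hzoneτ
      obtain ⟨hτ0, hτ1, hqτ, hFuqτ⟩ := hB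
      have hFuqτ' : 0 < Fu (q τ) := lt_of_lt_of_le hτ0 hFuqτ
      have h1 : (v^(-1/ξ) - t) * Fu (q τ) < Fu (v * q τ) := (lt_div_iff₀ hFuqτ').1 hratτ
      have h2 : (K x - t) * Fu (v*q τ) ≤ F x (v * q τ) := (hzoneτ x hx).1
      have h3 : s * τ < F x (v * q τ) := by
        have hKt : 0 < K x - t := by linarith
        have hvt : 0 < v^(-1/ξ) - t := by linarith
        have c2 : (v^(-1/ξ)-t) * τ ≤ (v^(-1/ξ)-t) * Fu (q τ) :=
          mul_le_mul_of_nonneg_left hFuqτ hvt.le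
        have c3 : (K x - t) * ((v^(-1/ξ)-t) * τ) ≤ (K x - t) * Fu (v * q τ) :=
          mul_le_mul_of_nonneg_left (le_trans c2 h1.le) hKt.le
        calc s * τ < ((K x - t)*(v^(-1/ξ)-t)) * τ := mul_lt_mul_of_pos_right hts hτ0
          _ = (K x - t) * ((v^(-1/ξ)-t) * τ) := by ring
          _ ≤ (K x - t) * Fu (v * q τ) := c3
          _ ≤ F x (v * q τ) := h2
      exact hQle x hx _ (mul_pos hs hτ0) _ h3
    have hlower : ∀ᶠ τ in 𝓝[>] (0:ℝ), (φ - e) * q τ ≤ Q x (s*τ) := by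
      rcases le_or_gt (φ - e) 0 with hw | hw
      · filter_upwards [hbase] with τ hB
        obtain ⟨hτ0, _, hqτ, _⟩ := hB
        exact le_trans (mul_nonpos_of_nonpos_of_nonneg hw hqτ.le)
          (hQnonneg x hx _ (mul_pos hs hτ0))
      · set w : ℝ := φ - e with hwdef
        have hws : K x * w^(-1/ξ) < s := by
          have h1 : w^(-1/ξ) < φ^(-1/ξ) := Real.rpow_lt_rpow hw.le (by linarith) hexp
          rw [hφinv] at h1
          calc K x * w^(-1/ξ) < K x * (s / K x) := mul_lt_mul_of_pos_left h1 hKx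
            _ = s := by field_simp
        obtain ⟨t, hts, ht2, ht0⟩ : ∃ t : ℝ, (K x + t) * ((w/(1-t))^(-1/ξ) + t) < s ∧
            t < 1/2 ∧ 0 < t := by
          have hcb : ContinuousAt (fun t : ℝ => w/(1-t)) 0 := by
            apply ContinuousAt.div continuousAt_const (continuous_const.sub continuous_id).continuousAt
            norm_num
          have hcr : ContinuousAt (fun t : ℝ => (w/(1-t)) ^ (-1/ξ)) 0 := by
            refine ContinuousAt.rpow_const hcb (Or.inl ?_)
            simp only [sub_zero, div_one]
            exact ne_of_gt hw
          have hc : ContinuousAt (fun t : ℝ => (K x + t) * ((w/(1-t))^(-1/ξ) + t)) 0 := by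
            apply ContinuousAt.mul
            · exact (continuous_const.add continuous_id).continuousAt
            · exact hcr.add continuous_id.continuousAt
          have e1 : ∀ᶠ t : ℝ in 𝓝[>] (0:ℝ), (K x + t) * ((w/(1-t))^(-1/ξ) + t) < s := by
            have h := hc.tendsto.mono_left (nhdsWithin_le_nhds (s := Set.Ioi (0:ℝ)))
            have h' : Tendsto (fun t : ℝ => (K x + t) * ((w/(1-t))^(-1/ξ) + t)) (𝓝[>] (0:ℝ))
                (𝓝 (K x * w^(-1/ξ))) := by
              have hc0 : ((fun t : ℝ => (K x + t) * ((w/(1-t))^(-1/ξ) + t)) 0)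
                  = K x * w^(-1/ξ) := by norm_num
              rw [← hc0]
              exact h
            exact h'.eventually_lt_const hws
          have e2 : ∀ᶠ t : ℝ in 𝓝[>] (0:ℝ), t < 1/2 :=
            (tendsto_id.mono_left nhdsWithin_le_nhds).eventually_lt_const (by norm_num)
          exact ((e1.and (e2.and self_mem_nhdsWithin)).mono
            (fun t ⟨a, b, c⟩ => ⟨a, b, c⟩)).exists
        have h1t : 0 < 1 - t := by linarith
        have hwt : 0 < w / (1-t) := div_pos hw h1t
        have hzone2 : ∀ᶠ τ in 𝓝[>] (0:ℝ), ∀ y ∈ Xs,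
            (K y - t) * Fu (w * q τ) ≤ F y (w * q τ) ∧
            F y (w * q τ) ≤ (K y + t) * Fu (w * q τ) :=
          ((hmulIoi w hw).comp hqto0).eventually (htail t ht0)
        have hrat2 : Tendsto (fun τ => Fu (w * q τ) / Fu ((1-t) * q τ)) (𝓝[>] (0:ℝ))
            (𝓝 ((w/(1-t))^(-1/ξ))) := by
          have hbase2 := (hreg _ hwt).comp ((hmulIoi (1-t) h1t).comp hqto0)
          refine Tendsto.congr (fun τ => ?_) hbase2
          have : w/(1-t) * ((1-t) * q τ) = w * q τ := by field_simp
          rw [Function.comp_apply, Function.comp_apply, this]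
        have hratev2 : ∀ᶠ τ in 𝓝[>] (0:ℝ),
            Fu (w * q τ) / Fu ((1-t) * q τ) < (w/(1-t))^(-1/ξ) + t :=
          hrat2.eventually_lt_const (lt_add_of_pos_right _ ht0)
        obtain ⟨β, hβ0, hβ⟩ := hSxne x hx
        have hβev : ∀ᶠ τ in 𝓝[>] (0:ℝ), s * τ < β :=
          ((hmulIoi s hs).mono_right nhdsWithin_le_nhds).eventually_lt_const hβ0
        filter_upwards [hbase, hzone2, hratev2, hβev] with τ hB hzoneτ hratτ hβτ
        obtain ⟨hτ0, hτ1, hqτ, hFuqτ⟩ := hB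
        have hne : {z | s * τ < F x z}.Nonempty := hβ _ (mul_pos hs hτ0) hβτ
        have h5 : Fu ((1-t) * q τ) ≤ τ := hqlt τ hτ0 _ (by nlinarith)
        have h6 : 0 < Fu ((1-t) * q τ) := hFupos _ (by positivity)
        have h7 : Fu (w * q τ) ≤ ((w/(1-t))^(-1/ξ) + t) * Fu ((1-t) * q τ) :=
          ((div_lt_iff₀ h6).1 hratτ).le
        have h8 : F x (w * q τ) ≤ (K x + t) * Fu (w * q τ) := (hzoneτ x hx).2
        have h9 : F x (w * q τ) < s * τ := by
          have hcoef : 0 ≤ (w/(1-t))^(-1/ξ) + t := by positivity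
          have hKt : (0:ℝ) ≤ K x + t := by linarith
          have c1 : Fu (w * q τ) ≤ ((w/(1-t))^(-1/ξ) + t) * τ :=
            le_trans h7 (mul_le_mul_of_nonneg_left h5 hcoef)
          have c2 : F x (w * q τ) ≤ (K x + t) * (((w/(1-t))^(-1/ξ) + t) * τ) :=
            le_trans h8 (mul_le_mul_of_nonneg_left c1 hKt)
          have c3 : (K x + t) * (((w/(1-t))^(-1/ξ) + t) * τ) < s * τ := by
            have hh := mul_lt_mul_of_pos_right hts hτ0
            calc (K x + t) * (((w/(1-t))^(-1/ξ) + t) * τ)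
                = ((K x + t) * ((w/(1-t))^(-1/ξ) + t)) * τ := by ring
              _ < s * τ := hh
          linarith
        refine le_csInf hne fun z hz => ?_
        by_contra hzw
        push_neg at hzw
        have hmono := hFmono x hx (le_of_lt hzw)
        rw [Set.mem_setOf_eq] at hz
        linarith
    filter_upwards [hupper, hlower] with τ h1 h2
    exact ⟨h1, h2⟩
  -- UNIFORM VERSION over compact sets
  have lemU : ∀ x ∈ Xs, ∀ Ks : Set ℝ, IsCompact Ks → Ks ⊆ Set.Ioi 0 → ∀ ε₀ : ℝ, 0 < ε₀ →
      ∀ᶠ τ in 𝓝[>] (0:ℝ), ∀ s ∈ Ks, |Q x (s*τ) / q τ - s^(-ξ) * K x ^ ξ| ≤ ε₀ := by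
    intro x hx Ks hKsc hKs ε₀ hε₀
    rcases Set.eq_empty_or_nonempty Ks with rfl | hKne
    · filter_upwards with τ s hs
      exact absurd hs (Set.notMem_empty s)
    obtain ⟨β, hβ0, hβ⟩ := hSxne x hx
    have hKx := hKpos x hx
    set φ : ℝ → ℝ := fun u => u^(-ξ) * K x ^ ξ with hφdef
    have hφmono : ∀ u u' : ℝ, 0 ≤ u → u ≤ u' → φ u ≤ φ u' := fun u u' hu huu =>
      mul_le_mul_of_nonneg_right (Real.rpow_le_rpow hu huu hnegxi.le)
        (Real.rpow_pos_of_pos hKx _).le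
    have hcov : ∀ s ∈ Ks, ∃ p : ℝ × ℝ, 0 < p.1 ∧ p.1 < s ∧ s < p.2 ∧ φ p.2 - φ p.1 ≤ ε₀/2 := by
      intro s hs
      have hs0 : 0 < s := hKs hs
      have hφc : ContinuousAt φ s := by
        apply ContinuousAt.mul ?_ continuousAt_const
        exact Real.continuousAt_rpow_const _ _ (Or.inl (ne_of_gt hs0))
      obtain ⟨δ, hδ0, hδ⟩ := Metric.continuousAt_iff.1 hφc (ε₀/8) (by positivity)
      refine ⟨(max (s - δ/2) (s/2), s + δ/2), ?_, ?_, ?_, ?_⟩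
      · exact lt_max_of_lt_right (by positivity)
      · exact max_lt (by linarith) (by linarith)
      · simp only; linarith
      · have h1 : dist (max (s - δ/2) (s/2)) s < δ := by
          rw [Real.dist_eq, abs_lt]
          constructor
          · have : s - δ/2 ≤ max (s - δ/2) (s/2) := le_max_left _ _
            linarith
          · have h2 : max (s - δ/2) (s/2) < s := max_lt (by linarith) (by linarith)
            linarith
        have h2 : dist (s + δ/2) s < δ := by
          rw [Real.dist_eq, abs_lt]; constructor <;> linarith
        have e1 := hδ h1
        have e2 := hδ h2
        rw [Real.dist_eq, abs_lt] at e1 e2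
        simp only
        linarith
    choose! p hp1 hp2 hp3 hp4 using hcov
    obtain ⟨tt, htmem, htcov⟩ := hKsc.elim_nhds_subcover (fun s => Set.Ioo (p s).1 (p s).2)
      (fun s hs => Ioo_mem_nhds (hp2 s hs) (hp3 s hs))
    have hev1 : ∀ᶠ τ in 𝓝[>] (0:ℝ), ∀ i ∈ tt,
        (Q x ((p i).1*τ) ≤ (φ (p i).1 + ε₀/4) * q τ ∧
          (φ (p i).1 - ε₀/4) * q τ ≤ Q x ((p i).1*τ)) ∧
        (Q x ((p i).2*τ) ≤ (φ (p i).2 + ε₀/4) * q τ ∧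
          (φ (p i).2 - ε₀/4) * q τ ≤ Q x ((p i).2*τ)) ∧
        (p i).2 * τ < β := by
      rw [eventually_all_finset]
      intro i hi
      have hiK := htmem i hi
      have hi0 : 0 < i := hKs hiK
      have hi1 : 0 < (p i).1 := hp1 i hiK
      have hi2 : 0 < (p i).2 := lt_trans hi0 (hp3 i hiK)
      have e1 := lemA x hx _ hi1 (ε₀/4) (by positivity)
      have e2 := lemA x hx _ hi2 (ε₀/4) (by positivity)
      have e3 : ∀ᶠ τ in 𝓝[>] (0:ℝ), (p i).2 * τ < β :=
        ((hmulIoi _ hi2).mono_right nhdsWithin_le_nhds).eventually_lt_const hβ0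
      filter_upwards [e1, e2, e3] with τ a b c
      exact ⟨a, b, c⟩
    filter_upwards [hev1, hbase] with τ hev hB
    obtain ⟨hτ0, hτ1, hqτ, hFuqτ⟩ := hB
    intro s hs
    obtain ⟨i, hit, hsio⟩ := Set.mem_iUnion₂.1 (htcov hs)
    have hs0 : 0 < s := hKs hs
    have hiK := htmem i hit
    have hi1 : 0 < (p i).1 := hp1 i hiK
    have hi2 : 0 < (p i).2 := lt_trans (hKs hiK) (hp3 i hiK)
    have hQm : ∀ u u' : ℝ, 0 < u → u ≤ u' → {z | u' < F x z}.Nonempty → Q x u ≤ Q x u' := by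
      intro u u' hu huu hne
      exact csInf_le_csInf (hSxbdd x hx u hu) hne (fun z hz => lt_of_le_of_lt huu hz)
    have hβ2 := (hev i hit).2.2
    have hne2 : {z | (p i).2 * τ < F x z}.Nonempty := hβ _ (mul_pos hi2 hτ0) hβ2
    have hnes : {z | s * τ < F x z}.Nonempty :=
      hβ _ (mul_pos hs0 hτ0) (lt_trans (mul_lt_mul_of_pos_right hsio.2 hτ0) hβ2)
    have hφs1 : φ (p i).1 ≤ φ s := hφmono _ _ hi1.le hsio.1.le
    have hφs2 : φ s ≤ φ (p i).2 := hφmono _ _ hs0.le hsio.2.le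
    have hφd := hp4 i hiK
    have hub : Q x (s*τ) ≤ (φ s + ε₀) * q τ := by
      have c1 : Q x (s*τ) ≤ Q x ((p i).2 * τ) :=
        hQm _ _ (mul_pos hs0 hτ0) (mul_le_mul_of_nonneg_right hsio.2.le hτ0.le) hne2
      have c2 := (hev i hit).2.1.1
      have c3 : (φ (p i).2 + ε₀/4) * q τ ≤ (φ s + ε₀) * q τ := by
        have : φ (p i).2 + ε₀/4 ≤ φ s + ε₀ := by linarith
        exact mul_le_mul_of_nonneg_right this hqτ.le
      linarith
    have hlb : (φ s - ε₀) * q τ ≤ Q x (s*τ) := by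
      have c1 : Q x ((p i).1 * τ) ≤ Q x (s * τ) :=
        hQm _ _ (mul_pos hi1 hτ0) (mul_le_mul_of_nonneg_right hsio.1.le hτ0.le) hnes
      have c2 := (hev i hit).1.2
      have c3 : (φ s - ε₀) * q τ ≤ (φ (p i).1 - ε₀/4) * q τ := by
        have : φ s - ε₀ ≤ φ (p i).1 - ε₀/4 := by linarith
        exact mul_le_mul_of_nonneg_right this hqτ.le
      linarith
    have hdiv1 : Q x (s*τ) / q τ ≤ φ s + ε₀ := (div_le_iff₀ hqτ).2 hub
    have hdiv2 : φ s - ε₀ ≤ Q x (s*τ) / q τ := (le_div_iff₀ hqτ).2 hlb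
    have hφs : φ s = s^(-ξ) * K x ^ ξ := rfl
    rw [abs_le]
    exact ⟨by linarith, by linarith⟩
  -- choose a finite subset of the support spanning the same space
  obtain ⟨b, hbXs, hbspan, hbind⟩ := exists_linearIndependent ℝ Xs
  have hbfin : b.Finite := hbind.setFinite
  haveI : Fintype ↥b := hbfin.fintype
  -- the evaluation linear map
  let L : (Fin d → ℝ) →ₗ[ℝ] (↥b → ℝ) :=
    { toFun := fun w j => ∑ i, (j : Fin d → ℝ) i * w i
      map_add' := by
        intro u v
        funext j
        simp only [Pi.add_apply, mul_add, Finset.sum_add_distrib]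
      map_smul' := by
        intro a u
        funext j
        simp only [Pi.smul_apply, smul_eq_mul, RingHom.id_apply, Finset.mul_sum]
        exact Finset.sum_congr rfl fun i _ => by ring }
  have hLapp : ∀ w : Fin d → ℝ, ∀ j : ↥b, L w j = ∑ i, (j : Fin d → ℝ) i * w i :=
    fun w j => rfl
  have hLker : LinearMap.ker L = ⊥ := by
    rw [LinearMap.ker_eq_bot']
    intro w hw
    apply hker w
    intro x hxXs
    let φw : (Fin d → ℝ) →ₗ[ℝ] ℝ :=
      { toFun := fun v => ∑ i, v i * w i
        map_add' := by
          intro u v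
          simp only [Pi.add_apply, add_mul, Finset.sum_add_distrib]
        map_smul' := by
          intro a u
          simp only [Pi.smul_apply, smul_eq_mul, RingHom.id_apply, Finset.mul_sum]
          exact Finset.sum_congr rfl fun i _ => by ring }
    have hsub : b ⊆ (LinearMap.ker φw : Set (Fin d → ℝ)) := by
      intro y hy
      have h0 : L w ⟨y, hy⟩ = 0 := by rw [hw]; rfl
      rw [hLapp] at h0
      exact LinearMap.mem_ker.2 h0
    have hsub2 : Submodule.span ℝ Xs ≤ LinearMap.ker φw := by
      rw [← hbspan]
      exact Submodule.span_le.2 hsub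
    exact LinearMap.mem_ker.1 (hsub2 (Submodule.subset_span hxXs))
  obtain ⟨C, hC0, hCanti⟩ := L.exists_antilipschitzWith hLker
  -- eventual identification of Q with the linear specification
  have hIoc : ∀ᶠ τ in 𝓝[>] (0:ℝ), τ ∈ Set.Ioc (0:ℝ) η := by
    have h : ∀ᶠ τ in 𝓝[>] (0:ℝ), τ < η :=
      (tendsto_id.mono_left nhdsWithin_le_nhds).eventually_lt_const hη0
    filter_upwards [h, self_mem_nhdsWithin] with τ h1 h2
    exact ⟨h2, h1.le⟩
  have hQγ : ∀ᶠ τ in 𝓝[>] (0:ℝ), ∀ x ∈ Xs, Q x τ = ∑ i, x i * γ τ i := by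
    filter_upwards [hIoc] with τ hτ x hx
    exact hlin τ hτ x hx
  -- pointwise limits of the normalized quantile coefficients
  have hxlim : ∀ x ∈ Xs, Tendsto (fun τ => (∑ i, x i * γ τ i) / q τ) (𝓝[>] (0:ℝ))
      (𝓝 (K x ^ ξ)) := by
    intro x hx
    rw [Metric.tendsto_nhds]
    intro ε hε
    have hA := lemA x hx 1 one_pos (ε/2) (by positivity)
    filter_upwards [hA, hbase, hQγ] with τ hAτ hB hQγτ
    obtain ⟨h1, h2⟩ := hAτ
    obtain ⟨hτ0, _, hqτ, _⟩ := hB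
    rw [one_mul] at h1 h2
    rw [Real.one_rpow, one_mul] at h1 h2
    rw [← hQγτ x hx, Real.dist_eq, abs_lt]
    have d1 : Q x τ / q τ ≤ K x ^ ξ + ε/2 := (div_le_iff₀ hqτ).2 h1
    have d2 : K x ^ ξ - ε/2 ≤ Q x τ / q τ := (le_div_iff₀ hqτ).2 h2
    exact ⟨by linarith, by linarith⟩
  -- the candidate vector c
  set g : ℝ → (Fin d → ℝ) := fun τ => (q τ)⁻¹ • γ τ with hgdef
  have hgsum : ∀ x : Fin d → ℝ, ∀ τ : ℝ, (∑ i, x i * g τ i) = (∑ i, x i * γ τ i) / q τ := by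
    intro x τ
    rw [Finset.sum_div]
    refine Finset.sum_congr rfl fun i _ => ?_
    rw [hgdef]
    simp only [Pi.smul_apply, smul_eq_mul]
    rw [div_eq_inv_mul]
    ring
  have hvlim : Tendsto (fun τ => L (g τ)) (𝓝[>] (0:ℝ))
      (𝓝 (fun j : ↥b => K (j : Fin d → ℝ) ^ ξ)) := by
    rw [tendsto_pi_nhds]
    intro j
    have h := hxlim j (hbXs j.2)
    refine Tendsto.congr (fun τ => ?_) h
    rw [← hgsum, hLapp]
  have hrange : (fun j : ↥b => K (j : Fin d → ℝ) ^ ξ) ∈ LinearMap.range L := by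
    refine (Submodule.closed_of_finiteDimensional (LinearMap.range L)).mem_of_tendsto hvlim ?_
    filter_upwards with τ
    exact LinearMap.mem_range_self L (g τ)
  obtain ⟨c, hLc⟩ := hrange
  have hgc : Tendsto g (𝓝[>] (0:ℝ)) (𝓝 c) := by
    rw [tendsto_iff_dist_tendsto_zero]
    have hdb : ∀ τ, dist (g τ) c ≤ (C:ℝ) * dist (L (g τ)) (fun j : ↥b => K (j : Fin d → ℝ) ^ ξ) := by
      intro τ
      calc dist (g τ) c ≤ (C:ℝ) * dist (L (g τ)) (L c) := hCanti.le_mul_dist (g τ) c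
        _ = (C:ℝ) * dist (L (g τ)) (fun j : ↥b => K (j : Fin d → ℝ) ^ ξ) := by rw [hLc]
    refine squeeze_zero (fun τ => dist_nonneg) hdb ?_
    have h : Tendsto (fun τ => dist (L (g τ)) (fun j : ↥b => K (j : Fin d → ℝ) ^ ξ)) (𝓝[>] (0:ℝ))
        (𝓝 (dist (fun j : ↥b => K (j : Fin d → ℝ) ^ ξ) (fun j : ↥b => K (j : Fin d → ℝ) ^ ξ))) :=
      hvlim.dist tendsto_const_nhds
    rw [dist_self] at h
    have h2 := h.const_mul (C:ℝ)
    rw [mul_zero] at h2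
    exact h2
  -- the dot products with c
  have hdotc : ∀ x : Fin d → ℝ, Tendsto (fun τ => ∑ i, x i * g τ i) (𝓝[>] (0:ℝ))
      (𝓝 (∑ i, x i * c i)) := by
    intro x
    refine tendsto_finset_sum _ fun i _ => ?_
    exact ((tendsto_pi_nhds.1 hgc) i).const_mul (x i)
  have hdotK : ∀ x ∈ Xs, (∑ i, x i * c i) = K x ^ ξ := by
    intro x hx
    have h1 : Tendsto (fun τ => (∑ i, x i * γ τ i) / q τ) (𝓝[>] (0:ℝ))
        (𝓝 (∑ i, x i * c i)) := (hdotc x).congr fun τ => hgsum x τ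
    exact tendsto_nhds_unique h1 (hxlim x hx)
  -- the mean condition
  have hmean' : ∀ v : Fin d → ℝ, (∑ i, (∫ x, x i ∂μ) * v i) = v ⟨0, hd⟩ := by
    intro v
    rw [Finset.sum_eq_single (⟨0, hd⟩ : Fin d)]
    · rw [hmean]; simp
    · intro i _ hi
      rw [hmean]
      have h : (i : ℕ) ≠ 0 := fun h => hi (Fin.ext h)
      simp [h]
    · intro h; exact absurd (Finset.mem_univ _) h
  have hqγ : ∀ᶠ τ in 𝓝[>] (0:ℝ), q τ = γ τ ⟨0, hd⟩ := by
    filter_upwards [hIoc] with τ hτ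
    exact (hFuinv τ hτ).trans (hmean' (γ τ))
  have hc0 : c ⟨0, hd⟩ = 1 := by
    have h1 : Tendsto (fun τ => g τ ⟨0, hd⟩) (𝓝[>] (0:ℝ)) (𝓝 (c ⟨0, hd⟩)) :=
      tendsto_pi_nhds.1 hgc _
    have h2 : ∀ᶠ τ in 𝓝[>] (0:ℝ), g τ ⟨0, hd⟩ = 1 := by
      filter_upwards [hqγ, hbase] with τ h hB
      obtain ⟨hτ0, _, hqτ, _⟩ := hB
      rw [hgdef]
      simp only [Pi.smul_apply, smul_eq_mul]
      rw [← h]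
      exact inv_mul_cancel₀ (ne_of_gt hqτ)
    exact tendsto_nhds_unique (h1.congr' (h2.mono fun τ ht => ht)) tendsto_const_nhds
  refine ⟨c, by rw [hmean']; exact hc0, fun x hx => ?_, ?_⟩
  · have hKx := hKpos x hx
    have hpos : 0 < (∑ i, x i * c i) := by
      rw [hdotK x hx]
      exact Real.rpow_pos_of_pos hKx _
    refine ⟨hpos, ?_⟩
    rw [hdotK x hx, ← Real.rpow_mul hKx.le, mul_one_div_cancel hξ0, Real.rpow_one]
  -- the main uniform convergence statement
  intro Ks hKsc hKs ε hε
  set ε₀ : ℝ := ε / (2 * ((C:ℝ) + 1)) with hε₀def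
  have hC1 : (0:ℝ) < (C:ℝ) + 1 := by positivity
  have hε₀ : 0 < ε₀ := by positivity
  rcases Set.eq_empty_or_nonempty Ks with rfl | hKne
  · filter_upwards with T k hk
    exact absurd hk (Set.notMem_empty k)
  obtain ⟨bK, hbK0, hbKle⟩ : ∃ bK : ℝ, 0 < bK ∧ ∀ k ∈ Ks, k ≤ bK :=
    ⟨sSup Ks, hKs (hKsc.sSup_mem hKne), fun k hk => le_csSup hKsc.bddAbove hk⟩
  have hevτ : ∀ᶠ τ in 𝓝[>] (0:ℝ),
      (0 < τ ∧ 0 < q τ) ∧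
      (∀ j : ↥b, ∀ s ∈ Ks,
        |Q (j : Fin d → ℝ) (s*τ) / q τ - s^(-ξ) * K (j : Fin d → ℝ) ^ ξ| ≤ ε₀) ∧
      bK * τ ≤ η := by
    have hall : ∀ᶠ τ in 𝓝[>] (0:ℝ), ∀ j : ↥b, ∀ s ∈ Ks,
        |Q (j : Fin d → ℝ) (s*τ) / q τ - s^(-ξ) * K (j : Fin d → ℝ) ^ ξ| ≤ ε₀ :=
      eventually_all.2 fun j => lemU _ (hbXs j.2) Ks hKsc hKs ε₀ hε₀
    have hβη : ∀ᶠ τ in 𝓝[>] (0:ℝ), bK * τ ≤ η :=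
      (((hmulIoi bK hbK0).mono_right nhdsWithin_le_nhds).eventually_lt_const hη0).mono
        fun τ h => h.le
    filter_upwards [hbase, hall, hβη] with τ h1 h2 h3
    exact ⟨⟨h1.1, h1.2.2.1⟩, h2, h3⟩
  have hτT : Tendsto (fun T : ℕ => 1/(T:ℝ)) atTop (𝓝[>] (0:ℝ)) := by
    rw [tendsto_nhdsWithin_iff]
    refine ⟨tendsto_one_div_atTop_nhds_zero_nat, ?_⟩
    filter_upwards [eventually_gt_atTop 0] with T hT
    have h : (0:ℝ) < T := by exact_mod_cast hT
    exact Set.mem_Ioi.2 (by positivity)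
  filter_upwards [hτT.eventually hevτ] with T hT k hk
  obtain ⟨⟨hτ0, hqτ⟩, hU, hβη⟩ := hT
  have hk0 : 0 < k := hKs hk
  have hkτ : k / (T:ℝ) = k * (1/(T:ℝ)) := (mul_one_div k (T:ℝ)).symm
  have hkτIoc : k * (1/(T:ℝ)) ∈ Set.Ioc (0:ℝ) η :=
    ⟨mul_pos hk0 hτ0, le_trans (mul_le_mul_of_nonneg_right (hbKle k hk) hτ0.le) hβη⟩
  have hsInfq : sInf {z | (1:ℝ)/(T:ℝ) < Fu z} = q (1/(T:ℝ)) := rfl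
  set u1 : Fin d → ℝ := (1 / q (1/(T:ℝ))) • γ (k * (1/(T:ℝ))) with hu1def
  set u2 : Fin d → ℝ := (k^(-ξ)) • c with hu2def
  have hdist : dist (L u1) (L u2) ≤ ε₀ := by
    rw [dist_pi_le_iff hε₀.le]
    intro j
    have h1 : L u1 j = Q (j : Fin d → ℝ) (k * (1/(T:ℝ))) / q (1/(T:ℝ)) := by
      rw [hLapp, hu1def]
      have hQs := hlin _ hkτIoc _ (hbXs j.2)
      rw [hQdef]
      simp only
      rw [hQs, Finset.sum_div]
      refine Finset.sum_congr rfl fun i _ => ?_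
      simp only [Pi.smul_apply, smul_eq_mul]
      rw [div_eq_inv_mul, one_div]
      ring
    have h2 : L u2 j = k^(-ξ) * K (j : Fin d → ℝ) ^ ξ := by
      rw [hLapp, hu2def, ← hdotK _ (hbXs j.2), Finset.mul_sum]
      refine Finset.sum_congr rfl fun i _ => ?_
      simp only [Pi.smul_apply, smul_eq_mul]
      ring
    rw [h1, h2, Real.dist_eq]
    exact hU j k hk
  calc ‖(1 / sInf {z | (1:ℝ)/(T:ℝ) < Fu z}) • γ (k / (T:ℝ)) - (k^(-ξ)) • c‖
      = dist u1 u2 := by rw [hsInfq, hkτ, dist_eq_norm]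
    _ ≤ (C:ℝ) * dist (L u1) (L u2) := hCanti.le_mul_dist u1 u2
    _ ≤ (C:ℝ) * ε₀ := mul_le_mul_of_nonneg_left hdist C.coe_nonneg
    _ < ε := by
        rw [hε₀def]
        rw [div_eq_inv_mul, ← mul_assoc]
        have hC : (0:ℝ) ≤ (C:ℝ) := C.coe_nonneg
        have hlt : (C:ℝ) * (2 * ((C:ℝ)+1))⁻¹ < 1 := by
          rw [mul_inv_lt_iff₀ (by positivity)]
          linarith
        calc (C:ℝ) * (2*((C:ℝ)+1))⁻¹ * ε < 1 * ε := mul_lt_mul_of_pos_right hlt hε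
          _ = ε := one_mul ε
end
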